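/- arXiv:1805.04673 — 10 statements merged into one kernel-verified Lean document; each statement's English description precedes it below -/
import Mathlib

section
/- Let N be an odd positive integer, θ ∈ (0, π/2), and k ∈ {0, 1, …, 2N−1}, and set λ_k = exp(πik/N). Then the vector v ∈ ℂ^(2N) whose components are v_{(0,n)} = a_n(λ_k) and v_{(1,n)} = b_n(λ_k) for 0 ≤ n ≤ N−1 is an eigenvector of U_psw(θ): U_psw(θ)·v = λ_k·v. -/
open Complex

/-- `ω = exp(2πi/N)`. -/
noncomputable def omegaN (N : ℕ) : ℂ := Complex.exp (2 * Real.pi * Complex.I / N)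

/-- The phase-space quantum walk operator `U_psw(θ)`, a `2N × 2N` matrix indexed by
(coin, walker) pairs, with block form `[[cosθ·T, sinθ·T],[sinθ·T̃, −cosθ·T̃]]`,
where `T` is the cyclic shift (`T|n⟩ = |n+1⟩`) and `T̃` the diagonal matrix with
`T̃|n⟩ = ω^n|n⟩`. -/
noncomputable def Upsw (N : ℕ) (θ : ℝ) :
    Matrix (Fin 2 × ZMod N) (Fin 2 × ZMod N) ℂ := fun p q =>
  if p.1 = 0 then
    (if q.1 = 0 then (Real.cos θ : ℂ) else (Real.sin θ : ℂ)) *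
      (if p.2 = q.2 + 1 then 1 else 0)
  else
    (if q.1 = 0 then (Real.sin θ : ℂ) else (-Real.cos θ : ℂ)) *
      (if p.2 = q.2 then omegaN N ^ (q.2.val) else 0)

/-- `a_n(λ) = ω^(−n(n−1)/2) · ∏_{j=0}^{n−1} (1 + λ⁻¹ωʲ/cosθ)/(1 + λω⁻ʲ/cosθ)`. -/
noncomputable def aCoef (N : ℕ) (θ : ℝ) (lam : ℂ) (n : ℕ) : ℂ :=
  (omegaN N)⁻¹ ^ (n * (n - 1) / 2) *
    ∏ j ∈ Finset.range n,
      (1 + lam⁻¹ * omegaN N ^ j / (Real.cos θ : ℂ)) /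
      (1 + lam * (omegaN N)⁻¹ ^ j / (Real.cos θ : ℂ))

/-- `b_n(λ) = a_n(λ)·tanθ/(1 + λω⁻ⁿ/cosθ)`. -/
noncomputable def bCoef (N : ℕ) (θ : ℝ) (lam : ℂ) (n : ℕ) : ℂ :=
  aCoef N θ lam n * (Real.tan θ : ℂ) / (1 + lam * (omegaN N)⁻¹ ^ n / (Real.cos θ : ℂ))

/-! ### Auxiliary lemmas -/

lemma psw_prod_one_add {N : ℕ} (hN : Odd N) {ζ : ℂ} (hζ : IsPrimitiveRoot ζ N) (μ : ℂ) :
    ∏ j ∈ Finset.range N, (1 + μ * ζ ^ j) = 1 + μ ^ N := by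
  have hN0 : 0 < N := hN.pos
  rcases eq_or_ne μ 0 with rfl | hμ
  · simp [zero_pow hN0.ne']
  · have h := X_pow_sub_C_eq_prod hζ hN0 (one_pow N)
    have h2 := congrArg (Polynomial.eval (-μ⁻¹)) h
    simp only [Polynomial.eval_sub, Polynomial.eval_pow, Polynomial.eval_X, Polynomial.eval_C,
      Polynomial.eval_prod, mul_one, Polynomial.eval_one] at h2
    have key : ∏ j ∈ Finset.range N, (1 + μ * ζ ^ j)
        = ∏ j ∈ Finset.range N, (-μ) * (-μ⁻¹ - ζ ^ j) := by
      refine Finset.prod_congr rfl fun j _ => ?_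
      field_simp
      ring
    rw [key, Finset.prod_mul_distrib, Finset.prod_const, Finset.card_range, ← h2]
    rw [hN.neg_pow, hN.neg_pow, inv_pow]
    have hp : μ ^ N ≠ 0 := pow_ne_zero _ hμ
    field_simp
    ring

lemma psw_tri (n : ℕ) : (n + 1) * n / 2 = n * (n - 1) / 2 + n := by
  rcases n with _ | m
  · simp
  · have h : (m + 1 + 1) * (m + 1) = (m + 1) * m + (m + 1) * 2 := by ring
    rw [h, Nat.add_mul_div_right _ _ (by norm_num : (0:ℕ) < 2)]
    simp

lemma psw_aCoef_succ (N : ℕ) (θ : ℝ) (lam : ℂ) (n : ℕ) :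
    aCoef N θ lam (n + 1) = (omegaN N)⁻¹ ^ n * aCoef N θ lam n *
      ((1 + lam⁻¹ * omegaN N ^ n / (Real.cos θ : ℂ)) /
       (1 + lam * (omegaN N)⁻¹ ^ n / (Real.cos θ : ℂ))) := by
  unfold aCoef
  rw [Finset.prod_range_succ]
  simp only [Nat.add_sub_cancel]
  rw [psw_tri, pow_add]
  ring

lemma psw_key2 (ω c s lam A : ℂ) (m : ℕ) (hc : c ≠ 0) (hω : ω ≠ 0)
    (hd' : c * ω ^ m + lam ≠ 0) :
    s * (ω ^ m * A) + (-c) * (ω ^ m * (A * (s / c) / (1 + lam * ω⁻¹ ^ m / c)))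
      = lam * (A * (s / c) / (1 + lam * ω⁻¹ ^ m / c)) := by
  have hp : ω ^ m ≠ 0 := pow_ne_zero _ hω
  have hDeq : 1 + lam * ω⁻¹ ^ m / c = (c * ω ^ m + lam) / (c * ω ^ m) := by
    rw [inv_pow]; field_simp
  rw [hDeq]
  have hd'' : ω ^ m * c + lam ≠ 0 := by rwa [mul_comm]
  field_simp
  ring

lemma psw_key1 (ω c s lam A : ℂ) (m : ℕ) (hc : c ≠ 0) (hω : ω ≠ 0) (hlam : lam ≠ 0)
    (hd' : c * ω ^ m + lam ≠ 0) (hpy : s ^ 2 + c ^ 2 = 1) :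
    c * A + s * (A * (s / c) / (1 + lam * ω⁻¹ ^ m / c))
      = lam * (ω⁻¹ ^ m * A * ((1 + lam⁻¹ * ω ^ m / c) / (1 + lam * ω⁻¹ ^ m / c))) := by
  have hp : ω ^ m ≠ 0 := pow_ne_zero _ hω
  have hDeq : 1 + lam * ω⁻¹ ^ m / c = (c * ω ^ m + lam) / (c * ω ^ m) := by
    rw [inv_pow]; field_simp
  have hEeq : 1 + lam⁻¹ * ω ^ m / c = (c * lam + ω ^ m) / (c * lam) := by
    field_simp
  rw [hDeq, hEeq, inv_pow]
  field_simp
  linear_combination A * ω ^ m * hpy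

/-- for odd `N`, `θ ∈ (0, π/2)` and `0 ≤ k < 2N`, the vector with
components `a_n(λ_k)` and `b_n(λ_k)` is an eigenvector of `U_psw(θ)` with
eigenvalue `λ_k = exp(πik/N)`. -/
theorem psw_eigenvector (N : ℕ) [NeZero N] (hN : Odd N)
    (θ : ℝ) (hθ : θ ∈ Set.Ioo 0 (Real.pi / 2))
    (k : ℕ) (hk : k < 2 * N)
    (lam : ℂ) (hlam : lam = Complex.exp (Real.pi * Complex.I * k / N))
    (v : Fin 2 × ZMod N → ℂ)
    (hv0 : ∀ n : ZMod N, v (0, n) = aCoef N θ lam n.val)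
    (hv1 : ∀ n : ZMod N, v (1, n) = bCoef N θ lam n.val) :
    (Upsw N θ).mulVec v = lam • v := by
  obtain ⟨hθ0, hθ1⟩ := hθ
  have hNne : (N : ℕ) ≠ 0 := NeZero.ne N
  have hN0 : 0 < N := Nat.pos_of_ne_zero hNne
  have hNC : (N : ℂ) ≠ 0 := Nat.cast_ne_zero.mpr hNne
  set ω : ℂ := omegaN N with hω_def
  have hζ : IsPrimitiveRoot ω N := Complex.isPrimitiveRoot_exp N hNne
  have hω0 : ω ≠ 0 := hζ.ne_zero hNne
  have hωN : ω ^ N = 1 := hζ.pow_eq_one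
  have habsω : ‖ω‖ = 1 := by
    have : (2 * (Real.pi : ℂ) * Complex.I / N) = ((2 * Real.pi / N : ℝ) : ℂ) * Complex.I := by
      push_cast; ring
    rw [hω_def, omegaN, this, Complex.norm_exp_ofReal_mul_I]
  have habslam : ‖lam‖ = 1 := by
    have : ((Real.pi : ℂ) * Complex.I * k / N) = ((Real.pi * k / N : ℝ) : ℂ) * Complex.I := by
      push_cast; ring
    rw [hlam, this, Complex.norm_exp_ofReal_mul_I]
  have hlam0 : lam ≠ 0 := by
    intro h; rw [h] at habslam; simp at habslam
  have hlam2N : lam ^ (2 * N) = 1 := by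
    rw [hlam, ← Complex.exp_nat_mul]
    have : (↑(2 * N) : ℂ) * ((Real.pi : ℂ) * Complex.I * k / N) = (k : ℤ) * (2 * Real.pi * Complex.I) := by
      push_cast; field_simp
    rw [this, Complex.exp_int_mul_two_pi_mul_I]
  -- trig facts
  have hcos : 0 < Real.cos θ :=
    Real.cos_pos_of_mem_Ioo ⟨by linarith [Real.pi_pos], hθ1⟩
  have hsin : 0 < Real.sin θ :=
    Real.sin_pos_of_pos_of_lt_pi hθ0 (by linarith [Real.pi_pos])
  have hcos1 : Real.cos θ < 1 := by
    have := Real.cos_lt_cos_of_nonneg_of_le_pi (le_refl 0)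
      (by linarith [Real.pi_pos]) hθ0
    simpa using this
  set c : ℂ := (Real.cos θ : ℂ) with hc_def
  set s : ℂ := (Real.sin θ : ℂ) with hs_def
  have hc0 : c ≠ 0 := by
    simp only [hc_def, Ne, Complex.ofReal_eq_zero]; exact hcos.ne'
  have htan : (Real.tan θ : ℂ) = s / c := by
    rw [hs_def, hc_def, Real.tan_eq_sin_div_cos, Complex.ofReal_div]
  have hpy : s ^ 2 + c ^ 2 = 1 := by
    rw [hs_def, hc_def]
    norm_cast
    exact Real.sin_sq_add_cos_sq θ
  -- denominators
  have hd' : ∀ m : ℕ, c * ω ^ m + lam ≠ 0 := by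
    intro m h
    have h1 : ‖c * ω ^ m‖ = Real.cos θ := by
      rw [norm_mul, norm_pow, habsω, one_pow, mul_one, hc_def, Complex.norm_real, Real.norm_eq_abs,
        abs_of_pos hcos]
    have h2 : lam = -(c * ω ^ m) := eq_neg_of_add_eq_zero_right h
    have h3 : ‖lam‖ = Real.cos θ := by rw [h2, norm_neg, h1]
    rw [habslam] at h3
    linarith
  have hDeq : ∀ m : ℕ, 1 + lam * ω⁻¹ ^ m / c = (c * ω ^ m + lam) / (c * ω ^ m) := by
    intro m
    rw [inv_pow]
    have hp : ω ^ m ≠ 0 := pow_ne_zero _ hω0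
    field_simp
  have hd : ∀ m : ℕ, (1 + lam * ω⁻¹ ^ m / c) ≠ 0 := fun m => by
    rw [hDeq m]
    exact div_ne_zero (hd' m) (mul_ne_zero hc0 (pow_ne_zero _ hω0))
  -- a_N = 1
  have hprodD : ∏ j ∈ Finset.range N, (1 + lam * ω⁻¹ ^ j / c) = 1 + (lam / c) ^ N := by
    have h1 : ∀ j ∈ Finset.range N, 1 + lam * ω⁻¹ ^ j / c = 1 + (lam / c) * (ω⁻¹) ^ j :=
      fun j _ => by ring
    rw [Finset.prod_congr rfl h1, psw_prod_one_add hN hζ.inv]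
  have hprodE : ∏ j ∈ Finset.range N, (1 + lam⁻¹ * ω ^ j / c) = 1 + (lam⁻¹ / c) ^ N := by
    have h1 : ∀ j ∈ Finset.range N, 1 + lam⁻¹ * ω ^ j / c = 1 + (lam⁻¹ / c) * ω ^ j :=
      fun j _ => by ring
    rw [Finset.prod_congr rfl h1, psw_prod_one_add hN hζ]
  have hlamN : lam⁻¹ ^ N = lam ^ N := by
    have h2 : lam ^ N * lam ^ N = 1 := by
      rw [← pow_add, show N + N = 2 * N by ring, hlam2N]
    rw [inv_pow]
    exact inv_eq_of_mul_eq_one_left h2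
  have hDne : (1 + lam ^ N / c ^ N) ≠ 0 := by
    rw [← div_pow, ← hprodD]
    exact Finset.prod_ne_zero_iff.mpr fun j _ => hd j
  have hAN : aCoef N θ lam N = 1 := by
    unfold aCoef
    obtain ⟨r, hr⟩ := hN
    have ht2 : N * (N - 1) / 2 = N * r := by
      have : N - 1 = 2 * r := by omega
      rw [this, show N * (2 * r) = N * r * 2 by ring, Nat.mul_div_cancel _ (by norm_num)]
    rw [ht2, pow_mul, inv_pow, hωN, inv_one, one_pow, one_mul,
      Finset.prod_div_distrib, hprodD, hprodE]
    rw [div_pow, div_pow, hlamN]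
    exact div_self hDne
  have hA0 : aCoef N θ lam 0 = 1 := by simp [aCoef]
  -- recurrences
  have hrec1 : ∀ m : ℕ, c * aCoef N θ lam m + s * bCoef N θ lam m
      = lam * aCoef N θ lam (m + 1) := by
    intro m
    rw [bCoef, psw_aCoef_succ, htan]
    exact psw_key1 ω c s lam (aCoef N θ lam m) m hc0 hω0 hlam0 (hd' m) hpy
  have hrec2 : ∀ m : ℕ, s * (ω ^ m * aCoef N θ lam m) + (-c) * (ω ^ m * bCoef N θ lam m)
      = lam * bCoef N θ lam m := by
    intro m
    rw [bCoef, htan]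
    exact psw_key2 ω c s lam (aCoef N θ lam m) m hc0 hω0 (hd' m)
  have hwrap : c * aCoef N θ lam (N - 1) + s * bCoef N θ lam (N - 1) = lam := by
    have h := hrec1 (N - 1)
    rw [show N - 1 + 1 = N by omega, hAN, mul_one] at h
    exact h
  have hvalcast : ∀ x : ZMod N, ((x.val : ℕ) : ZMod N) = x := ZMod.natCast_rightInverse
  -- sum lemmas
  have hshift : ∀ (g : ℂ) (f : ZMod N → ℂ) (n : ZMod N),
      (∑ x : ZMod N, (g * if n = x + 1 then (1:ℂ) else 0) * f x) = g * f (n - 1) := by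
    intro g f n
    rw [Finset.sum_eq_single (n - 1)]
    · rw [if_pos (by ring), mul_one]
    · intro x _ hx
      rw [if_neg, mul_zero, zero_mul]
      intro h
      exact hx (by rw [h]; ring)
    · simp
  have hdiag : ∀ (g : ℂ) (f : ZMod N → ℂ) (n : ZMod N),
      (∑ x : ZMod N, (g * if n = x then ω ^ x.val else 0) * f x) = g * ω ^ n.val * f n := by
    intro g f n
    rw [Finset.sum_eq_single n]
    · rw [if_pos rfl, mul_assoc]
    · intro x _ hx
      rw [if_neg (fun h => hx h.symm), mul_zero, zero_mul]
    · simp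
  funext p
  obtain ⟨i, n⟩ := p
  simp only [Matrix.mulVec, dotProduct, Fintype.sum_prod_type, Fin.sum_univ_two, Upsw,
    Pi.smul_apply, smul_eq_mul]
  fin_cases i
  · simp only [Fin.mk_zero, Fin.isValue, if_pos rfl, one_ne_zero, if_true, if_false,
      reduceIte]
    rw [hshift c (fun x => v (0, x)) n, hshift s (fun x => v (1, x)) n]
    rw [hv0, hv1, hv0]
    by_cases hn : n = 0
    · subst hn
      have hsub : ((0 : ZMod N) - 1) = ((N - 1 : ℕ) : ZMod N) := by
        rw [Nat.cast_sub (by omega), ZMod.natCast_self, Nat.cast_one]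
      have hval1 : ((0 : ZMod N) - 1).val = N - 1 := by
        rw [hsub, ZMod.val_cast_of_lt (by omega)]
      rw [hval1, ZMod.val_zero, hA0, mul_one]
      exact hwrap
    · have h1 : 1 ≤ n.val := by
        rcases Nat.eq_zero_or_pos n.val with h | h
        · exact absurd ((ZMod.val_eq_zero n).mp h) hn
        · exact h
      have hcast : ((n.val - 1 : ℕ) : ZMod N) = n - 1 := by
        rw [Nat.cast_sub h1, hvalcast n, Nat.cast_one]
      have hval1 : (n - 1).val = n.val - 1 := by
        rw [← hcast, ZMod.val_cast_of_lt (lt_of_le_of_lt (Nat.sub_le _ _) (ZMod.val_lt n))]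
      rw [hval1]
      have h := hrec1 (n.val - 1)
      rw [show n.val - 1 + 1 = n.val by omega] at h
      exact h
  · simp only [Fin.mk_one, Fin.isValue, one_ne_zero, if_false, if_true, reduceIte]
    rw [hdiag s (fun x => v (0, x)) n, hdiag (-c) (fun x => v (1, x)) n]
    rw [hv0, hv1]
    linear_combination hrec2 n.val
end

section
/- Let N be an odd positive integer and θ ∈ (0, π/2]. Then the spectrum of the 2N×2N unitary matrix U_psw(θ) is exactly the set of all 2N-th roots of unity {exp(πik/N) : k = 0, 1, …, 2N−1}, and every eigenvalue is simple. In particular the spectrum is independent of θ. -/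
open Complex

open Polynomial
open scoped Matrix

namespace PswSpectrumAux

lemma omegaN_prim (N : ℕ) [NeZero N] : IsPrimitiveRoot (omegaN N) N :=
  Complex.isPrimitiveRoot_exp N (NeZero.ne N)

lemma abs_eq_one_of_pow_eq_one {z : ℂ} {n : ℕ} (hn : n ≠ 0) (h : z ^ n = 1) :
    ‖z‖ = 1 := by
  have h1 : ‖z‖ ^ n = 1 := by rw [← norm_pow, h, norm_one]
  by_contra hne
  rcases lt_or_gt_of_ne hne with hlt | hgt
  · exact absurd h1 (ne_of_lt (pow_lt_one₀ (norm_nonneg z) hlt hn))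
  · exact absurd h1 (ne_of_gt (one_lt_pow₀ hgt hn))

lemma prod_lin (N : ℕ) [NeZero N] (hN : Odd N) (u v : ℂ) :
    ∏ m ∈ Finset.range N, (u + v * omegaN N ^ m) = u ^ N + v ^ N := by
  have hpos : 0 < N := Nat.pos_of_ne_zero (NeZero.ne N)
  have e : (-v) ^ N = -(v ^ N) := Odd.neg_pow hN v
  have h := X_pow_sub_C_eq_prod (omegaN_prim N) hpos e
  have h2 := congrArg (Polynomial.eval u) h
  simp only [eval_sub, eval_pow, eval_X, eval_C, eval_prod, sub_neg_eq_add] at h2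
  calc ∏ m ∈ Finset.range N, (u + v * omegaN N ^ m)
      = ∏ m ∈ Finset.range N, (u - omegaN N ^ m * -v) := by
        apply Finset.prod_congr rfl; intros; ring
    _ = u ^ N + v ^ N := h2.symm

lemma charpoly_eval {n : Type*} [Fintype n] [DecidableEq n]
    (M : Matrix n n ℂ) (z : ℂ) :
    M.charpoly.eval z = (z • (1 : Matrix n n ℂ) - M).det := by
  rw [Matrix.charpoly, eval_det, Matrix.matPolyEquiv_charmatrix]
  congr 1
  rw [Polynomial.eval_sub, Polynomial.eval_X, Polynomial.eval_C]
  congr 1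
  ext i j
  by_cases h : i = j <;>
    simp [Matrix.scalar_apply, Matrix.one_apply, Matrix.diagonal_apply, h]

lemma mem_spectrum_iff' {n : Type*} [Fintype n] [DecidableEq n]
    (M : Matrix n n ℂ) (z : ℂ) :
    z ∈ spectrum ℂ M ↔ M.charpoly.IsRoot z := by
  rw [spectrum.mem_iff, Matrix.isUnit_iff_isUnit_det, isUnit_iff_ne_zero, not_ne_iff,
    IsRoot, charpoly_eval]
  have : (algebraMap ℂ (Matrix n n ℂ)) z = z • (1 : Matrix n n ℂ) := by
    ext i j
    by_cases h : i = j <;>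
      simp [Matrix.algebraMap_matrix_apply, Matrix.one_apply, h]
  rw [this]

lemma sum_shift {N : ℕ} [NeZero N] (h : ZMod N → ℂ) (n : ZMod N) :
    (∑ q : ZMod N, if n = q + 1 then h q else 0) = h (n - 1) := by
  rw [Finset.sum_eq_single (n - 1)]
  · have h1 : n = n - 1 + 1 := by ring
    exact if_pos h1
  · intro q _ hq
    have hne : n ≠ q + 1 := fun hh => hq (by rw [hh]; ring)
    simp [hne]
  · simp

lemma charpoly_isRoot (N : ℕ) [NeZero N] (hN : Odd N) (θ : ℝ)
    (hθ : θ ∈ Set.Ioc 0 (Real.pi / 2)) {ζ : ℂ} (hζ : ζ ^ (2 * N) = 1) :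
    (Upsw N θ).charpoly.IsRoot ζ := by
  have hNpos : 0 < N := Nat.pos_of_ne_zero (NeZero.ne N)
  set ω : ℂ := omegaN N with hω
  set c : ℂ := (Real.cos θ : ℂ) with hcdef
  set s : ℂ := (Real.sin θ : ℂ) with hsdef
  obtain ⟨hθ1, hθ2⟩ := hθ
  have hpi := Real.pi_pos
  have hcos_lt : Real.cos θ < 1 := by
    rcases lt_or_eq_of_le (Real.cos_le_one θ) with h | h
    · exact h
    · exfalso
      have h0 := (Real.cos_eq_one_iff_of_lt_of_lt
        (by nlinarith) (by nlinarith)).mp h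
      linarith
  have hcos_nonneg : 0 ≤ Real.cos θ :=
    Real.cos_nonneg_of_mem_Icc ⟨by linarith, hθ2⟩
  have habsc : ‖c‖ < 1 := by
    rw [hcdef, Complex.norm_real, Real.norm_eq_abs, _root_.abs_of_nonneg hcos_nonneg]; exact hcos_lt
  have hζabs : ‖ζ‖ = 1 :=
    abs_eq_one_of_pow_eq_one (by positivity) hζ
  have hζ0 : ζ ≠ 0 := by
    intro h; rw [h] at hζabs; simp at hζabs
  have hωabs : ‖ω‖ = 1 :=
    abs_eq_one_of_pow_eq_one (NeZero.ne N) (omegaN_prim N).pow_eq_one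
  have hden : ∀ m : ℕ, ζ + c * ω ^ m ≠ 0 := by
    intro m h
    have h1 : ζ = -(c * ω ^ m) := by linear_combination h
    have h2 : ‖ζ‖ < 1 := by
      rw [h1, norm_neg, norm_mul, norm_pow, hωabs, one_pow, mul_one]
      exact habsc
    rw [hζabs] at h2; exact lt_irrefl 1 h2
  have hdenN : ζ ^ N + c ^ N ≠ 0 := by
    intro h
    have h1 : ζ ^ N = -(c ^ N) := by linear_combination h
    have h2 : ‖ζ ^ N‖ < 1 := by
      rw [h1, norm_neg, norm_pow]
      exact pow_lt_one₀ (norm_nonneg c) habsc (NeZero.ne N)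
    rw [norm_pow, hζabs, one_pow] at h2; exact lt_irrefl 1 h2
  have hcs : c * c + s * s = 1 := by
    rw [hcdef, hsdef]
    norm_cast
    nlinarith [Real.sin_sq_add_cos_sq θ]
  -- the eigenvector data
  set f : ℕ → ℂ := fun n => ∏ m ∈ Finset.range n,
      ((c * ζ + ω ^ m) / (ζ * (ζ + c * ω ^ m))) with hf
  have hf0 : f 0 = 1 := by simp [hf]
  have hstep : ∀ m : ℕ, ζ * f (m + 1) * (ζ + c * ω ^ m) = f m * (c * ζ + ω ^ m) := by
    intro m
    have h1 : f (m + 1) = f m * ((c * ζ + ω ^ m) / (ζ * (ζ + c * ω ^ m))) := by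
      rw [hf]; exact Finset.prod_range_succ _ m
    have h2 : (c * ζ + ω ^ m) / (ζ * (ζ + c * ω ^ m)) * (ζ * (ζ + c * ω ^ m))
        = c * ζ + ω ^ m := div_mul_cancel₀ _ (mul_ne_zero hζ0 (hden m))
    rw [h1]
    linear_combination f m * h2
  have hfN : f N = 1 := by
    have hnum : ∏ m ∈ Finset.range N, (c * ζ + ω ^ m) = c ^ N * ζ ^ N + 1 := by
      have := prod_lin N hN (c * ζ) 1
      simpa [mul_pow] using this
    have hdenprod : ∏ m ∈ Finset.range N, (ζ + c * ω ^ m) = ζ ^ N + c ^ N :=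
      prod_lin N hN ζ c
    have hζN : ζ ^ N * ζ ^ N = 1 := by
      rw [← pow_add, show N + N = 2 * N by ring]; exact hζ
    rw [hf]
    simp only [Finset.prod_div_distrib, Finset.prod_mul_distrib, Finset.prod_const,
      Finset.card_range, hnum, hdenprod]
    rw [div_eq_one_iff_eq (mul_ne_zero (pow_ne_zero N hζ0) hdenN)]
    linear_combination -hζN
  have hwrap : ∀ m : ZMod N, f ((m + 1).val) = f (m.val + 1) := by
    intro m
    have hm : ((m.val : ℕ) : ZMod N) = m := ZMod.natCast_rightInverse m
    by_cases h : m.val + 1 < N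
    · have h1 : (m + 1 : ZMod N).val = m.val + 1 := by
        conv_lhs => rw [← hm]
        rw [← Nat.cast_one, ← Nat.cast_add, ZMod.val_cast_of_lt h]
      rw [h1]
    · have hNv : m.val + 1 = N := by have := ZMod.val_lt m; omega
      have h1 : (m + 1 : ZMod N) = 0 := by
        rw [← hm, ← Nat.cast_one, ← Nat.cast_add, hNv, ZMod.natCast_self]
      rw [h1, hNv, ZMod.val_zero, hf0, hfN]
  have key : ∀ m : ZMod N, ζ * f ((m + 1).val) * (ζ + c * ω ^ m.val)
      = f m.val * (c * ζ + ω ^ m.val) := by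
    intro m; rw [hwrap m]; exact hstep m.val
  -- the eigenvector
  set v : Fin 2 × ZMod N → ℂ := fun p =>
    if p.1 = 0 then f p.2.val
    else s * ω ^ p.2.val * f p.2.val / (ζ + c * ω ^ p.2.val) with hv
  have E1 : ∀ m : ZMod N,
      c * f m.val + s * (s * ω ^ m.val * f m.val / (ζ + c * ω ^ m.val))
        = ζ * f ((m + 1).val) := by
    intro m
    have hd := hden m.val
    have hQ : s * ω ^ m.val * f m.val / (ζ + c * ω ^ m.val) * (ζ + c * ω ^ m.val)
        = s * ω ^ m.val * f m.val := div_mul_cancel₀ _ hd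
    apply mul_right_cancel₀ hd
    rw [add_mul, mul_assoc s _ _, hQ]
    linear_combination (-1 : ℂ) * key m + f m.val * ω ^ m.val * hcs
  have E2 : ∀ n : ZMod N,
      s * ω ^ n.val * f n.val
        + -c * ω ^ n.val * (s * ω ^ n.val * f n.val / (ζ + c * ω ^ n.val))
        = ζ * (s * ω ^ n.val * f n.val / (ζ + c * ω ^ n.val)) := by
    intro n
    have hd := hden n.val
    have hQ : s * ω ^ n.val * f n.val / (ζ + c * ω ^ n.val) * (ζ + c * ω ^ n.val)
        = s * ω ^ n.val * f n.val := div_mul_cancel₀ _ hd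
    apply mul_right_cancel₀ hd
    rw [add_mul, mul_assoc (-c * ω ^ n.val) _ _, hQ, mul_assoc ζ _ _, hQ]
    ring
  have hUv : Upsw N θ *ᵥ v = ζ • v := by
    funext p
    obtain ⟨i, n⟩ := p
    simp only [Matrix.mulVec, dotProduct, Fintype.sum_prod_type]
    rw [Fin.sum_univ_two]
    fin_cases i
    · simp only [Upsw, hv, Complex.ofReal_neg, Pi.smul_apply, smul_eq_mul]
      norm_num
      rw [sum_shift, sum_shift]
      rw [show Complex.cos ↑θ = c by rw [hcdef, Complex.ofReal_cos],
          show Complex.sin ↑θ = s by rw [hsdef, Complex.ofReal_sin]]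
      have h5 := E1 (n - 1)
      rw [sub_add_cancel] at h5
      linear_combination h5
    · simp only [Upsw, hv, Complex.ofReal_neg, Pi.smul_apply, smul_eq_mul]
      norm_num
      rw [show Complex.cos ↑θ = c by rw [hcdef, Complex.ofReal_cos],
          show Complex.sin ↑θ = s by rw [hsdef, Complex.ofReal_sin], ← hω]
      linear_combination E2 n
  have hv0 : v ≠ 0 := by
    intro h0
    have h1 : v (0, 0) = 0 := by rw [h0]; rfl
    rw [hv] at h1
    simp only [ZMod.val_zero, hf0] at h1
    exact one_ne_zero h1
  rw [IsRoot, charpoly_eval, ← Matrix.exists_mulVec_eq_zero_iff]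
  refine ⟨v, hv0, ?_⟩
  rw [Matrix.sub_mulVec, Matrix.smul_mulVec, Matrix.one_mulVec, hUv, sub_self]

end PswSpectrumAux

open PswSpectrumAux in
/-- for odd `N` and `θ ∈ (0, π/2]`, the spectrum of `U_psw(θ)` is exactly
the set of all `2N`-th roots of unity `{exp(πik/N) : 0 ≤ k < 2N}`, and every eigenvalue
is simple (the characteristic polynomial splits into distinct linear factors, one for
each `2N`-th root of unity).  In particular the spectrum does not depend on `θ`. -/
theorem psw_spectrum_odd (N : ℕ) [NeZero N] (hN : Odd N)
    (θ : ℝ) (hθ : θ ∈ Set.Ioc 0 (Real.pi / 2)) :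
    spectrum ℂ (Upsw N θ)
      = {z : ℂ | ∃ k : ℕ, k < 2 * N ∧ z = Complex.exp (Real.pi * Complex.I * k / N)} ∧
    (Upsw N θ).charpoly
      = ∏ k ∈ Finset.range (2 * N),
          (Polynomial.X - Polynomial.C (Complex.exp (Real.pi * Complex.I * k / N))) := by
  have hNpos : 0 < N := Nat.pos_of_ne_zero (NeZero.ne N)
  have hNc : (N : ℂ) ≠ 0 := Nat.cast_ne_zero.mpr (NeZero.ne N)
  have hπ : (Real.pi : ℂ) ≠ 0 := by
    exact_mod_cast Real.pi_ne_zero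
  set ζ : ℕ → ℂ := fun k => Complex.exp (Real.pi * Complex.I * k / N) with hζdef
  have hpow : ∀ k : ℕ, ζ k ^ (2 * N) = 1 := by
    intro k
    rw [hζdef]
    simp only []
    rw [← Complex.exp_nat_mul]
    have h1 : ((2 * N : ℕ) : ℂ) * (Real.pi * Complex.I * k / N)
        = (k : ℤ) * (2 * Real.pi * Complex.I) := by
      push_cast
      field_simp
    rw [h1, Complex.exp_int_mul_two_pi_mul_I]
  have hinj : ∀ k, k < 2 * N → ∀ l, l < 2 * N → ζ k = ζ l → k = l := by
    intro k hk l hl h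
    rw [hζdef] at h
    simp only [] at h
    rw [Complex.exp_eq_exp_iff_exists_int] at h
    obtain ⟨t, ht⟩ := h
    have h2 : (Real.pi : ℂ) * Complex.I * k = Real.pi * Complex.I * (l + 2 * N * t) := by
      field_simp at ht
      linear_combination (Real.pi * Complex.I : ℂ) * ht
    have h3 : (k : ℂ) = (l : ℂ) + 2 * N * t :=
      mul_left_cancel₀ (mul_ne_zero hπ Complex.I_ne_zero) h2
    have h4 : (k : ℤ) = l + 2 * N * t := by exact_mod_cast h3
    have hk' : (0:ℤ) ≤ (k:ℤ) := Int.natCast_nonneg k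
    have hl0 : (0:ℤ) ≤ (l:ℤ) := Int.natCast_nonneg l
    have hk2 : (k:ℤ) < 2 * N := by exact_mod_cast hk
    have hl2 : (l:ℤ) < 2 * N := by exact_mod_cast hl
    have ht0 : t = 0 := by
      by_contra h0
      rcases lt_or_gt_of_ne h0 with h5 | h5
      · have h6 : 2 * (N:ℤ) * t ≤ 2 * N * (-1) :=
          mul_le_mul_of_nonneg_left (by omega) (by positivity)
        linarith
      · have h6 : 2 * (N:ℤ) * 1 ≤ 2 * N * t :=
          mul_le_mul_of_nonneg_left (by omega) (by positivity)
        linarith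
    rw [ht0] at h4
    omega
  have hcard : Fintype.card (Fin 2 × ZMod N) = 2 * N := by
    simp [ZMod.card]
  have hmonic := (Upsw N θ).charpoly_monic
  have hp0 : (Upsw N θ).charpoly ≠ 0 := hmonic.ne_zero
  have hdeg : (Upsw N θ).charpoly.natDegree = 2 * N := by
    rw [Matrix.charpoly_natDegree_eq_dim, hcard]
  have hsplits : ((Upsw N θ).charpoly).Splits :=
    IsAlgClosed.splits _
  have hrootscard : Multiset.card (Upsw N θ).charpoly.roots = 2 * N := by
    rw [Polynomial.splits_iff_card_roots.mp hsplits, hdeg]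
  have hmem : ∀ k ∈ Finset.range (2 * N), ζ k ∈ (Upsw N θ).charpoly.roots := by
    intro k hk
    rw [Polynomial.mem_roots hp0]
    exact charpoly_isRoot N hN θ hθ (hpow k)
  set S : Multiset ℂ := (Finset.range (2 * N)).val.map ζ with hS
  have hSnodup : S.Nodup := by
    rw [hS]
    refine Multiset.Nodup.map_on ?_ (Finset.range (2 * N)).nodup
    intro x hx y hy hxy
    exact hinj x (Finset.mem_range.mp hx) y (Finset.mem_range.mp hy) hxy
  have hSle : S ≤ (Upsw N θ).charpoly.roots := by
    rw [Multiset.le_iff_count]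
    intro z
    by_cases hz : z ∈ S
    · rw [Multiset.count_eq_one_of_mem hSnodup hz]
      obtain ⟨k, hk, rfl⟩ := Multiset.mem_map.mp hz
      exact Multiset.one_le_count_iff_mem.mpr (hmem k hk)
    · rw [Multiset.count_eq_zero_of_notMem hz]
      exact Nat.zero_le _
  have hScard : Multiset.card S = 2 * N := by
    rw [hS, Multiset.card_map]
    exact Finset.card_range _
  have hSR : S = (Upsw N θ).charpoly.roots :=
    Multiset.eq_of_le_of_card_le hSle (by rw [hrootscard, hScard])
  have hcp : (Upsw N θ).charpoly
      = ∏ k ∈ Finset.range (2 * N),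
          (Polynomial.X - Polynomial.C (Complex.exp (Real.pi * Complex.I * k / N))) := by
    rw [hsplits.eq_prod_roots_of_monic hmonic, ← hSR, hS,
      Multiset.map_map, Finset.prod_eq_multiset_prod]
    rfl
  refine ⟨?_, hcp⟩
  ext z
  rw [Set.mem_setOf_eq, mem_spectrum_iff', IsRoot, hcp, Polynomial.eval_prod,
    Finset.prod_eq_zero_iff]
  constructor
  · rintro ⟨k, hk, h⟩
    refine ⟨k, Finset.mem_range.mp hk, ?_⟩
    simpa [sub_eq_zero] using h
  · rintro ⟨k, hk, rfl⟩
    exact ⟨k, Finset.mem_range.mpr hk, by simp⟩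
end

section
/- Let N be an even positive integer and θ ∈ (0, π/2). Set α = (1/N)·arccos(cos^N θ). Then the spectrum of the 2N×2N unitary matrix U_psw(θ) is exactly the set {exp(iα)·ω^l : l = 0, …, N−1} ∪ {exp(−iα)·ω^l : l = 0, …, N−1}. -/
open Complex

namespace PswAux
open Finset

lemma omega_prim (N : ℕ) [NeZero N] : IsPrimitiveRoot (omegaN N) N := by
  simpa [omegaN] using Complex.isPrimitiveRoot_exp N (NeZero.ne N)

lemma abs_omega_pow (N : ℕ) [NeZero N] (k : ℕ) : ‖omegaN N ^ k‖ = 1 := by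
  have h1 : omegaN N = Complex.exp ((2 * Real.pi / N : ℝ) * Complex.I) := by
    rw [omegaN]; push_cast; ring_nf
  rw [norm_pow, h1, Complex.norm_exp_ofReal_mul_I, one_pow]

lemma omega_pow_ne (N : ℕ) [NeZero N] (k : ℕ) : omegaN N ^ k ≠ 0 := by
  intro h
  have := abs_omega_pow N k
  rw [h] at this; simp at this

lemma omega_pow_pow (N : ℕ) [NeZero N] (k : ℕ) : (omegaN N ^ k) ^ N = 1 := by
  rw [← pow_mul, mul_comm, pow_mul, (omega_prim N).pow_eq_one, one_pow]

lemma prod_sub_omega (N : ℕ) [NeZero N] (z : ℂ) :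
    ∏ k ∈ range N, (z - omegaN N ^ k) = z ^ N - 1 := by
  have h := omega_prim N
  have hpos : 0 < N := Nat.pos_of_ne_zero (NeZero.ne N)
  have hX := Polynomial.X_pow_sub_one_eq_prod (R := ℂ) hpos h
  have hev := congrArg (Polynomial.eval z) hX
  simp only [Polynomial.eval_sub, Polynomial.eval_pow, Polynomial.eval_X, Polynomial.eval_one,
    Polynomial.eval_prod, Polynomial.eval_sub, Polynomial.eval_C] at hev
  have heq : ∏ k ∈ range N, (z - omegaN N ^ k)
      = ∏ μ ∈ Polynomial.nthRootsFinset N (1 : ℂ), (z - μ) := by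
    refine Finset.prod_nbij (fun k => omegaN N ^ k) (fun k hk => ?_) (fun a ha b hb hab => ?_)
      (fun μ hμ => ?_) (fun k hk => rfl)
    · exact (Polynomial.mem_nthRootsFinset hpos 1).2 (omega_pow_pow N k)
    · exact h.pow_inj (mem_range.1 ha) (mem_range.1 hb) hab
    · obtain ⟨i, hi, hiμ⟩ := h.eq_pow_of_pow_eq_one ((Polynomial.mem_nthRootsFinset hpos 1).1 hμ)
      exact ⟨i, by simpa using hi, hiμ⟩
  rw [heq, ← hev]

lemma prod_sub_smul_omega (N : ℕ) [NeZero N] (z a : ℂ) :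
    ∏ k ∈ range N, (z - a * omegaN N ^ k) = z ^ N - a ^ N := by
  rcases eq_or_ne a 0 with rfl | ha
  · simp [zero_pow (NeZero.ne N)]
  · calc ∏ k ∈ range N, (z - a * omegaN N ^ k)
        = ∏ k ∈ range N, (a * (z / a - omegaN N ^ k)) := by
          refine Finset.prod_congr rfl fun k _ => ?_
          field_simp
      _ = a ^ N * ((z / a) ^ N - 1) := by
          rw [Finset.prod_mul_distrib, Finset.prod_const, prod_sub_omega, card_range]
      _ = z ^ N - a ^ N := by
          rw [div_pow, mul_sub, mul_one, mul_div_assoc', mul_div_cancel_left₀ _ (pow_ne_zero N ha)]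

lemma prod_add_smul_omega (N : ℕ) [NeZero N] (hN : Even N) (z a : ℂ) :
    ∏ k ∈ range N, (z + a * omegaN N ^ k) = z ^ N - a ^ N := by
  have h := prod_sub_smul_omega N (-z) a
  calc ∏ k ∈ range N, (z + a * omegaN N ^ k)
      = ∏ k ∈ range N, ((-1) * (-z - a * omegaN N ^ k)) :=
        Finset.prod_congr rfl fun k _ => by ring
    _ = (-1) ^ N * ∏ k ∈ range N, (-z - a * omegaN N ^ k) := by
        rw [Finset.prod_mul_distrib
            (f := fun _ : ℕ => (-1 : ℂ)) (g := fun k : ℕ => -z - a * omegaN N ^ k),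
          Finset.prod_const, card_range]
    _ = z ^ N - a ^ N := by rw [h, hN.neg_one_pow, one_mul, hN.neg_pow]

lemma prod_zmod (N : ℕ) [NeZero N] (f : ℕ → ℂ) :
    ∏ n : ZMod N, f n.val = ∏ k ∈ range N, f k := by
  symm
  refine Finset.prod_nbij (fun k => (k : ZMod N)) (fun k _ => mem_univ _)
    (fun a ha b hb hab => ?_) (fun n _ => ?_) (fun k hk => ?_)
  · have := congrArg ZMod.val hab
    rwa [ZMod.val_cast_of_lt (mem_range.1 ha), ZMod.val_cast_of_lt (mem_range.1 hb)] at this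
  · exact ⟨n.val, mem_coe.2 (mem_range.2 (ZMod.val_lt n)), ZMod.natCast_rightInverse n⟩
  · rw [ZMod.val_cast_of_lt (mem_range.1 hk)]

lemma mem_spectrum_iff_exists {n : Type*} [Fintype n] [DecidableEq n]
    (M : Matrix n n ℂ) (μ : ℂ) :
    μ ∈ spectrum ℂ M ↔ ∃ v : n → ℂ, v ≠ 0 ∧ M.mulVec v = μ • v := by
  rw [spectrum.mem_iff, Matrix.isUnit_iff_isUnit_det, isUnit_iff_ne_zero, not_ne_iff,
    ← Matrix.exists_mulVec_eq_zero_iff]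
  have key : ∀ v : n → ℂ, (algebraMap ℂ (Matrix n n ℂ) μ - M).mulVec v = μ • v - M.mulVec v := by
    intro v
    rw [Matrix.sub_mulVec]
    congr 1
    rw [Matrix.algebraMap_eq_diagonal]; ext i; simp [Matrix.mulVec_diagonal]
  constructor
  · rintro ⟨v, hv, h⟩
    exact ⟨v, hv, by rw [key, sub_eq_zero] at h; exact h.symm⟩
  · rintro ⟨v, hv, h⟩
    exact ⟨v, hv, by rw [key, h, sub_self]⟩

lemma sum_pick1 {N : ℕ} [NeZero N] (f : ZMod N → ℂ) (a : ZMod N) :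
    ∑ m : ZMod N, (if a = m + 1 then f m else 0) = f (a - 1) := by
  have h : ∀ m : ZMod N, (a = m + 1) = (m = a - 1) := fun m =>
    propext ⟨fun h => by rw [h]; ring, fun h => by rw [h]; ring⟩
  simp [h]

lemma sum_pick2 {N : ℕ} [NeZero N] (f : ZMod N → ℂ) (a : ZMod N) :
    ∑ m : ZMod N, (if a = m then f m else 0) = f a := by simp

lemma mulVec_upsw0 {N : ℕ} [NeZero N] (θ : ℝ) (v : Fin 2 × ZMod N → ℂ) (n : ZMod N) :
    (Upsw N θ).mulVec v (0, n)
      = (Real.cos θ : ℂ) * v (0, n-1) + (Real.sin θ : ℂ) * v (1, n-1) := by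
  simp only [Matrix.mulVec, dotProduct, Fintype.sum_prod_type, Fin.sum_univ_two, Upsw,
    if_true, if_neg (show ¬(1:Fin 2) = 0 by decide), mul_ite, mul_one, mul_zero, ite_mul, zero_mul]
  rw [sum_pick1 (fun m => (Real.cos θ : ℂ) * v (0, m)),
    sum_pick1 (fun m => (Real.sin θ : ℂ) * v (1, m))]

lemma mulVec_upsw1 {N : ℕ} [NeZero N] (θ : ℝ) (v : Fin 2 × ZMod N → ℂ) (n : ZMod N) :
    (Upsw N θ).mulVec v (1, n)
      = omegaN N ^ n.val * ((Real.sin θ : ℂ) * v (0, n) - (Real.cos θ : ℂ) * v (1, n)) := by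
  simp only [Matrix.mulVec, dotProduct, Fintype.sum_prod_type, Fin.sum_univ_two, Upsw,
    if_true, if_neg (show ¬(1:Fin 2) = 0 by decide), mul_ite, mul_one, mul_zero, ite_mul, zero_mul]
  rw [sum_pick2 (fun m => (Real.sin θ : ℂ) * omegaN N ^ m.val * v (0, m)),
    sum_pick2 (fun m => -(Real.cos θ : ℂ) * omegaN N ^ m.val * v (1, m))]
  ring

section Main

variable {N : ℕ} [NeZero N] {θ : ℝ}

lemma spec_iff (hN : Even N) (hθ : θ ∈ Set.Ioo 0 (Real.pi / 2)) (μ : ℂ) :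
    μ ∈ spectrum ℂ (Upsw N θ) ↔
      μ ^ N * (μ ^ N - (Real.cos θ : ℂ) ^ N) = (Real.cos θ : ℂ) ^ N * μ ^ N - 1 := by
  classical
  set C : ℂ := (Real.cos θ : ℂ) with hCdef
  set S : ℂ := (Real.sin θ : ℂ) with hSdef
  have hc1 : (0:ℝ) < Real.cos θ :=
    Real.cos_pos_of_mem_Ioo ⟨by linarith [Real.pi_pos, hθ.1], hθ.2⟩
  have hc2 : Real.cos θ < 1 := by
    have := Real.cos_lt_cos_of_nonneg_of_le_pi le_rfl
      (by linarith [Real.pi_pos, hθ.2]) hθ.1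
    simpa using this
  have hs0 : (0:ℝ) < Real.sin θ :=
    Real.sin_pos_of_pos_of_lt_pi hθ.1 (by linarith [hθ.2, Real.pi_pos])
  have hCS : C ^ 2 + S ^ 2 = 1 := by
    rw [hCdef, hSdef]
    norm_cast
    rw [add_comm]
    exact Real.sin_sq_add_cos_sq θ
  have hS0 : S ≠ 0 := by
    rw [hSdef]; exact_mod_cast ne_of_gt hs0
  have hC0 : C ≠ 0 := by
    rw [hCdef]; exact_mod_cast ne_of_gt hc1
  have habsC : ‖C‖ = Real.cos θ := by
    rw [hCdef, Complex.norm_of_nonneg hc1.le]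
  have hW := fun n : ZMod N => omega_pow_ne N n.val
  have hC2N : C ^ (2*N) ≠ 1 := by
    intro h
    rw [hCdef, ← Complex.ofReal_pow] at h
    have h2 := congrArg Complex.re h
    simp only [Complex.ofReal_re, Complex.one_re] at h2
    have h3 : Real.cos θ ^ (2*N) < 1 :=
      pow_lt_one₀ (le_of_lt hc1) hc2 (by have := NeZero.ne N; omega)
    linarith
  constructor
  · -- hard direction
    intro h
    obtain ⟨v, hv0, hv⟩ := (mem_spectrum_iff_exists _ _).1 h
    have E1 : ∀ n : ZMod N, μ * v (0, n) = C * v (0, n-1) + S * v (1, n-1) := by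
      intro n
      have h1 := congrFun hv (0, n)
      rw [mulVec_upsw0, ← hCdef, ← hSdef] at h1
      simpa using h1.symm
    have E2 : ∀ n : ZMod N, μ * v (1, n)
        = omegaN N ^ n.val * (S * v (0, n) - C * v (1, n)) := by
      intro n
      have h1 := congrFun hv (1, n)
      rw [mulVec_upsw1, ← hCdef, ← hSdef] at h1
      simpa using h1.symm
    have R : ∀ n : ZMod N, μ * (μ + C * omegaN N ^ n.val) * v (0, n + 1)
        = (C * μ + omegaN N ^ n.val) * v (0, n) := by
      intro n
      have e1 := E1 (n + 1)
      rw [add_sub_cancel_right] at e1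
      have e2 := E2 n
      linear_combination (μ + C * omegaN N ^ n.val) * e1 + S * e2
        + (omegaN N ^ n.val * v (0, n)) * hCS
    have hv0ne : ∃ n, v (0, n) ≠ 0 := by
      by_contra hcon
      push_neg at hcon
      apply hv0
      have h1 : ∀ n : ZMod N, v (1, n) = 0 := by
        intro n
        have h2 := E1 (n + 1)
        rw [add_sub_cancel_right, hcon (n+1), hcon n] at h2
        simp only [mul_zero, zero_add] at h2
        rcases mul_eq_zero.1 h2.symm with h3 | h3
        · exact absurd h3 hS0
        · exact h3
      funext p
      obtain ⟨i, n⟩ := p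
      fin_cases i
      · exact hcon n
      · exact h1 n
    have hμ0 : μ ≠ 0 := by
      rintro rfl
      obtain ⟨n, hn⟩ := hv0ne
      apply hn
      have hd : S * v (0, n) - C * v (1, n) = 0 := by
        have h2 := E2 n
        rw [zero_mul] at h2
        exact (mul_eq_zero.1 h2.symm).resolve_left (hW n)
      have he : C * v (0, n) + S * v (1, n) = 0 := by
        have h2 := E1 (n + 1)
        rw [add_sub_cancel_right, zero_mul] at h2
        exact h2.symm
      have h3 : (C ^ 2 + S ^ 2) * v (0, n) = 0 := by linear_combination C * he + S * hd
      rw [hCS, one_mul] at h3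
      exact h3
    have hden : ∀ n : ZMod N, μ + C * omegaN N ^ n.val ≠ 0 := by
      by_contra hcon
      push_neg at hcon
      obtain ⟨m, hm⟩ := hcon
      have hnum : ∀ n : ZMod N, C * μ + omegaN N ^ n.val ≠ 0 := by
        intro n hzero
        have h1 : μ = -(C * omegaN N ^ m.val) := by linear_combination hm
        have h2 : omegaN N ^ n.val = C^2 * omegaN N ^ m.val := by
          rw [h1] at hzero; linear_combination hzero
        have h3 : ‖omegaN N ^ n.val‖ = ‖C^2 * omegaN N ^ m.val‖ := by rw [h2]
        rw [abs_omega_pow, norm_mul, abs_omega_pow, norm_pow, habsC, mul_one] at h3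
        nlinarith
      have hm0 : v (0, m) = 0 := by
        have h1 : (μ + C * omegaN N ^ m.val) * v (1, m)
            = S * omegaN N ^ m.val * v (0, m) := by
          linear_combination E2 m
        rw [hm, zero_mul] at h1
        rcases mul_eq_zero.1 h1.symm with h2 | h2
        · rcases mul_eq_zero.1 h2 with h3 | h3
          · exact absurd h3 hS0
          · exact absurd h3 (hW m)
        · exact h2
      have hback : ∀ k : ℕ, v (0, m - (k : ZMod N)) = 0 := by
        intro k
        induction k with
        | zero => simpa using hm0
        | succ k ih =>
          have r := R (m - (((k+1) : ℕ) : ZMod N))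
          have hidx : (m - (((k+1) : ℕ) : ZMod N)) + 1 = m - ((k : ℕ) : ZMod N) := by
            push_cast; ring
          rw [hidx, ih, mul_zero] at r
          exact (mul_eq_zero.1 r.symm).resolve_left (hnum _)
      obtain ⟨n, hn⟩ := hv0ne
      apply hn
      have h4 : n = m - (((m - n).val : ℕ) : ZMod N) := by
        rw [ZMod.natCast_rightInverse (m - n)]; ring
      rw [h4]
      exact hback (m - n).val
    have hvall : ∀ n : ZMod N, v (0, n) ≠ 0 := by
      by_contra hcon
      push_neg at hcon
      obtain ⟨m, hm⟩ := hcon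
      have hfwd : ∀ k : ℕ, v (0, m + (k : ZMod N)) = 0 := by
        intro k
        induction k with
        | zero => simpa using hm
        | succ k ih =>
          have r := R (m + ((k : ℕ) : ZMod N))
          rw [ih, mul_zero] at r
          have h1 : v (0, m + ((k : ℕ) : ZMod N) + 1) = 0 := by
            rcases mul_eq_zero.1 r with h2 | h2
            · exact absurd h2 (mul_ne_zero hμ0 (hden _))
            · exact h2
          have hidx : m + (((k+1) : ℕ) : ZMod N) = m + ((k : ℕ) : ZMod N) + 1 := by
            push_cast; ring
          rw [hidx]
          exact h1
      obtain ⟨n, hn⟩ := hv0ne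
      apply hn
      have h4 : n = m + (((n - m).val : ℕ) : ZMod N) := by
        rw [ZMod.natCast_rightInverse (n - m)]; ring
      rw [h4]
      exact hfwd (n - m).val
    have hprod : ∏ n : ZMod N, (μ * (μ + C * omegaN N ^ n.val) * v (0, n + 1))
        = ∏ n : ZMod N, ((C * μ + omegaN N ^ n.val) * v (0, n)) :=
      Finset.prod_congr rfl (fun n _ => R n)
    have hL : ∏ n : ZMod N, (μ * (μ + C * omegaN N ^ n.val) * v (0, n + 1))
        = (μ ^ N * (μ ^ N - C ^ N)) * ∏ n : ZMod N, v (0, n) := by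
      rw [Finset.prod_mul_distrib, Finset.prod_mul_distrib, Finset.prod_const, card_univ,
        ZMod.card]
      have h1 : ∏ n : ZMod N, (μ + C * omegaN N ^ n.val) = μ ^ N - C ^ N := by
        rw [prod_zmod N (fun k => μ + C * omegaN N ^ k), prod_add_smul_omega N hN]
      have h2 : ∏ n : ZMod N, v (0, n + 1) = ∏ n : ZMod N, v (0, n) :=
        Fintype.prod_equiv (Equiv.addRight (1 : ZMod N)) _ _ (fun n => rfl)
      rw [h1, h2]
    have hR : ∏ n : ZMod N, ((C * μ + omegaN N ^ n.val) * v (0, n))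
        = (C ^ N * μ ^ N - 1) * ∏ n : ZMod N, v (0, n) := by
      rw [Finset.prod_mul_distrib]
      have h1 : ∏ n : ZMod N, (C * μ + omegaN N ^ n.val) = C ^ N * μ ^ N - 1 := by
        rw [prod_zmod N (fun k => C * μ + omegaN N ^ k)]
        have := prod_add_smul_omega N hN (C * μ) 1
        rw [mul_pow] at this
        simpa using this
      rw [h1]
    rw [hL, hR] at hprod
    exact mul_right_cancel₀ (Finset.prod_ne_zero_iff.2 (fun n _ => hvall n)) hprod
  · -- converse: construct an eigenvector
    intro heq
    have hμ0 : μ ≠ 0 := by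
      rintro rfl
      rw [zero_pow (NeZero.ne N)] at heq
      simp at heq
    have hμN : μ ^ N ≠ C ^ N := by
      intro h
      rw [h, sub_self, mul_zero] at heq
      apply hC2N
      rw [two_mul, pow_add]
      linear_combination -heq
    have hden : ∀ k : ℕ, μ + C * omegaN N ^ k ≠ 0 := by
      intro k h
      apply hμN
      have h1 : μ = -(C * omegaN N ^ k) := by linear_combination h
      rw [h1, hN.neg_pow, mul_pow, omega_pow_pow, mul_one]
    have hnum : ∀ k : ℕ, C * μ + omegaN N ^ k ≠ 0 := by
      intro k h
      have h1 : C * μ = -(omegaN N ^ k) := by linear_combination h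
      have h2 : C ^ N * μ ^ N = 1 := by
        rw [← mul_pow, h1, hN.neg_pow, omega_pow_pow]
      have h3 : μ ^ N * μ ^ N = 1 := by linear_combination heq + 2 * h2
      apply hC2N
      have h4 : C ^ (2*N) * (μ ^ N * μ ^ N) = 1 := by
        rw [two_mul, pow_add]
        linear_combination (C ^ N * μ ^ N + 1) * h2
      rw [h3, mul_one] at h4
      exact h4
    set r : ℕ → ℂ := fun k => (C * μ + omegaN N ^ k) / (μ * (μ + C * omegaN N ^ k)) with hrdef
    set f : ℕ → ℂ := fun j => ∏ k ∈ range j, r k with hfdef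
    have hf0 : f 0 = 1 := by simp [hfdef]
    have hfN : f N = 1 := by
      rw [hfdef]
      simp only [hrdef]
      rw [Finset.prod_div_distrib, Finset.prod_mul_distrib, Finset.prod_const, card_range]
      have h1 : ∏ k ∈ range N, (C * μ + omegaN N ^ k) = C ^ N * μ ^ N - 1 := by
        have := prod_add_smul_omega N hN (C * μ) 1
        rw [mul_pow] at this
        simpa using this
      have h2 : ∏ k ∈ range N, (μ + C * omegaN N ^ k) = μ ^ N - C ^ N :=
        prod_add_smul_omega N hN μ C
      rw [h1, h2, div_eq_one_iff_eq (mul_ne_zero (pow_ne_zero _ hμ0) (sub_ne_zero.2 hμN))]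
      linear_combination -heq
    have hfne : ∀ j, f j ≠ 0 := fun j =>
      Finset.prod_ne_zero_iff.2 (fun k _ => div_ne_zero (hnum k) (mul_ne_zero hμ0 (hden k)))
    set v : Fin 2 × ZMod N → ℂ := fun p =>
      if p.1 = 0 then f p.2.val
      else S * omegaN N ^ p.2.val * f p.2.val / (μ + C * omegaN N ^ p.2.val) with hvdef
    have hv0val : ∀ n : ZMod N, v (0, n) = f n.val := fun n => by simp [hvdef]
    have hv1val : ∀ n : ZMod N, v (1, n)
        = S * omegaN N ^ n.val * f n.val / (μ + C * omegaN N ^ n.val) := fun n => by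
      simp only [hvdef]
      norm_num
    have key : ∀ m : ZMod N, μ * (μ + C * omegaN N ^ m.val) * f ((m + 1 : ZMod N)).val
        = (C * μ + omegaN N ^ m.val) * f m.val := by
      intro m
      have hjlt : m.val < N := ZMod.val_lt m
      have hm1 : ((m + 1 : ZMod N)).val = (m.val + 1) % N := by
        conv_lhs => rw [show (m + 1 : ZMod N) = (((m.val + 1 : ℕ)) : ZMod N) by
          rw [Nat.cast_add, Nat.cast_one, ZMod.natCast_rightInverse m]]
        rw [ZMod.val_natCast]
      have hsucc : f (m.val + 1) = f m.val * r m.val := Finset.prod_range_succ r m.val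
      have hrm : r m.val = (C * μ + omegaN N ^ m.val) / (μ * (μ + C * omegaN N ^ m.val)) := rfl
      rcases Nat.lt_or_ge (m.val + 1) N with hlt | hge
      · rw [hm1, Nat.mod_eq_of_lt hlt, hsucc, hrm]
        have hd : μ * (μ + C * omegaN N ^ m.val) ≠ 0 := mul_ne_zero hμ0 (hden m.val)
        calc μ * (μ + C * omegaN N ^ m.val)
              * (f m.val * ((C * μ + omegaN N ^ m.val) / (μ * (μ + C * omegaN N ^ m.val))))
            = (C * μ + omegaN N ^ m.val) * f m.val
              * (μ * (μ + C * omegaN N ^ m.val) / (μ * (μ + C * omegaN N ^ m.val))) := by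
              ring
          _ = (C * μ + omegaN N ^ m.val) * f m.val := by rw [div_self hd, mul_one]
      · have hNe : m.val + 1 = N := by omega
        rw [hm1, hNe, Nat.mod_self]
        have h2 : f m.val * r m.val = 1 := by
          rw [← hsucc, hNe, hfN]
        rw [hrm, ← mul_div_assoc, div_eq_iff (mul_ne_zero hμ0 (hden m.val))] at h2
        rw [hf0]
        linear_combination -h2
    have Hstep : ∀ m : ZMod N, C * v (0, m) + S * v (1, m) = μ * v (0, m + 1) := by
      intro m
      rw [hv0val, hv1val, hv0val]
      have hd : μ + C * omegaN N ^ m.val ≠ 0 := hden m.val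
      have hk := key m
      apply mul_right_cancel₀ hd
      have h1 : S * omegaN N ^ m.val * f m.val / (μ + C * omegaN N ^ m.val)
          * (μ + C * omegaN N ^ m.val) = S * omegaN N ^ m.val * f m.val :=
        div_mul_cancel₀ _ hd
      linear_combination S * h1 - hk + (omegaN N ^ m.val * f m.val) * hCS
    refine (mem_spectrum_iff_exists _ _).2 ⟨v, ?_, ?_⟩
    · intro hzero
      have h1 : v (0, 0) = 1 := by rw [hv0val, ZMod.val_zero, hf0]
      rw [hzero] at h1
      simpa using h1
    · funext p
      obtain ⟨i, n⟩ := p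
      fin_cases i
      · show (Upsw N θ).mulVec v (0, n) = (μ • v) (0, n)
        rw [mulVec_upsw0, ← hCdef, ← hSdef]
        simp only [Pi.smul_apply, smul_eq_mul]
        have h1 := Hstep (n - 1)
        have h2 : n - 1 + 1 = n := by ring
        rw [h2] at h1
        exact h1
      · show (Upsw N θ).mulVec v (1, n) = (μ • v) (1, n)
        rw [mulVec_upsw1, ← hCdef, ← hSdef]
        simp only [Pi.smul_apply, smul_eq_mul]
        rw [hv0val, hv1val]
        have hd : μ + C * omegaN N ^ n.val ≠ 0 := hden n.val
        apply mul_right_cancel₀ hd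
        have h1 : S * omegaN N ^ n.val * f n.val / (μ + C * omegaN N ^ n.val)
            * (μ + C * omegaN N ^ n.val) = S * omegaN N ^ n.val * f n.val :=
          div_mul_cancel₀ _ hd
        linear_combination (-(C * omegaN N ^ n.val) - μ) * h1

end Main
end PswAux

/-- for even positive `N` and `θ ∈ (0, π/2)`, with
`α = (1/N)·arccos(cosᴺθ)`, the spectrum of `U_psw(θ)` is
`{exp(iα)·ωˡ : 0 ≤ l < N} ∪ {exp(−iα)·ωˡ : 0 ≤ l < N}`. -/
theorem psw_spectrum_even (N : ℕ) [NeZero N] (hN : Even N)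
    (θ : ℝ) (hθ : θ ∈ Set.Ioo 0 (Real.pi / 2))
    (α : ℝ) (hα : α = Real.arccos (Real.cos θ ^ N) / N) :
    spectrum ℂ (Upsw N θ)
      = {z : ℂ | ∃ l : ℕ, l < N ∧ z = Complex.exp (Complex.I * α) * omegaN N ^ l}
      ∪ {z : ℂ | ∃ l : ℕ, l < N ∧ z = Complex.exp (-(Complex.I * α)) * omegaN N ^ l} := by
  classical
  have hc1 : (0:ℝ) < Real.cos θ :=
    Real.cos_pos_of_mem_Ioo ⟨by linarith [Real.pi_pos, hθ.1], hθ.2⟩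
  have hc2 : Real.cos θ < 1 := by
    have := Real.cos_lt_cos_of_nonneg_of_le_pi le_rfl
      (by linarith [Real.pi_pos, hθ.2]) hθ.1
    simpa using this
  set β : ℝ := Real.arccos (Real.cos θ ^ N) with hβdef
  have hcNle : Real.cos θ ^ N ≤ 1 := pow_le_one₀ (le_of_lt hc1) (le_of_lt hc2)
  have hcNge : (-1:ℝ) ≤ Real.cos θ ^ N :=
    le_trans (by norm_num) (le_of_lt (pow_pos hc1 N))
  have hβcos : Real.cos β = Real.cos θ ^ N := Real.cos_arccos hcNge hcNle
  have hNα : (N:ℝ) * α = β := by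
    have hNne : (N:ℝ) ≠ 0 := Nat.cast_ne_zero.mpr (NeZero.ne N)
    rw [hα]
    field_simp
  have hE : Complex.exp (Complex.I * β) + Complex.exp (-(Complex.I * β))
      = 2 * (Real.cos θ : ℂ) ^ N := by
    rw [mul_comm Complex.I (β:ℂ), ← neg_mul, Complex.exp_mul_I, Complex.exp_mul_I,
      Complex.cos_neg, Complex.sin_neg]
    rw [show Complex.cos (β:ℂ) = ((Real.cos β : ℝ) : ℂ) from (Complex.ofReal_cos β).symm, hβcos]
    push_cast
    ring
  have hEprod : Complex.exp (Complex.I * β) * Complex.exp (-(Complex.I * β)) = 1 := by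
    rw [← Complex.exp_add]
    simp
  have hexpP : (Complex.exp (Complex.I * (α:ℂ))) ^ N = Complex.exp (Complex.I * β) := by
    rw [← Complex.exp_nat_mul]
    congr 1
    push_cast [← hNα]
    ring
  have hexpM : (Complex.exp (-(Complex.I * (α:ℂ)))) ^ N = Complex.exp (-(Complex.I * β)) := by
    rw [← Complex.exp_nat_mul]
    congr 1
    push_cast [← hNα]
    ring
  ext z
  simp only [Set.mem_union, Set.mem_setOf_eq]
  rw [PswAux.spec_iff hN hθ z]
  have hfact : z ^ N * (z ^ N - (Real.cos θ : ℂ) ^ N) - ((Real.cos θ : ℂ) ^ N * z ^ N - 1)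
      = (z ^ N - Complex.exp (Complex.I * β)) * (z ^ N - Complex.exp (-(Complex.I * β))) := by
    linear_combination (z ^ N) * hE - hEprod
  constructor
  · intro h
    have h0 : (z ^ N - Complex.exp (Complex.I * β))
        * (z ^ N - Complex.exp (-(Complex.I * β))) = 0 := by
      rw [← hfact]
      linear_combination h
    rcases mul_eq_zero.1 h0 with h1 | h1
    · left
      have hz : z ^ N = Complex.exp (Complex.I * β) := by linear_combination h1
      have hw : (z * Complex.exp (-(Complex.I * (α:ℂ)))) ^ N = 1 := by
        rw [mul_pow, hz, hexpM, ← Complex.exp_add]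
        simp
      obtain ⟨l, hl, hlw⟩ := (PswAux.omega_prim N).eq_pow_of_pow_eq_one hw
      refine ⟨l, hl, ?_⟩
      rw [hlw, show Complex.exp (Complex.I * (α:ℂ)) * (z * Complex.exp (-(Complex.I * (α:ℂ))))
          = z * (Complex.exp (Complex.I * (α:ℂ)) * Complex.exp (-(Complex.I * (α:ℂ)))) from by
          ring, ← Complex.exp_add]
      simp
    · right
      have hz : z ^ N = Complex.exp (-(Complex.I * β)) := by linear_combination h1
      have hw : (z * Complex.exp (Complex.I * (α:ℂ))) ^ N = 1 := by
        rw [mul_pow, hz, hexpP, ← Complex.exp_add]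
        simp
      obtain ⟨l, hl, hlw⟩ := (PswAux.omega_prim N).eq_pow_of_pow_eq_one hw
      refine ⟨l, hl, ?_⟩
      rw [hlw, show Complex.exp (-(Complex.I * (α:ℂ))) * (z * Complex.exp (Complex.I * (α:ℂ)))
          = z * (Complex.exp (Complex.I * (α:ℂ)) * Complex.exp (-(Complex.I * (α:ℂ)))) from by
          ring, ← Complex.exp_add]
      simp
  · rintro (⟨l, hl, rfl⟩ | ⟨l, hl, rfl⟩)
    · have hzN : (Complex.exp (Complex.I * (α:ℂ)) * omegaN N ^ l) ^ N
          = Complex.exp (Complex.I * β) := by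
        rw [mul_pow, PswAux.omega_pow_pow N l, mul_one, hexpP]
      have h0 : ((Complex.exp (Complex.I * (α:ℂ)) * omegaN N ^ l) ^ N
            - Complex.exp (Complex.I * β))
          * ((Complex.exp (Complex.I * (α:ℂ)) * omegaN N ^ l) ^ N
            - Complex.exp (-(Complex.I * β))) = 0 := by
        rw [hzN]
        ring
      linear_combination hfact + h0
    · have hzN : (Complex.exp (-(Complex.I * (α:ℂ))) * omegaN N ^ l) ^ N
          = Complex.exp (-(Complex.I * β)) := by
        rw [mul_pow, PswAux.omega_pow_pow N l, mul_one, hexpM]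
      have h0 : ((Complex.exp (-(Complex.I * (α:ℂ))) * omegaN N ^ l) ^ N
            - Complex.exp (Complex.I * β))
          * ((Complex.exp (-(Complex.I * (α:ℂ))) * omegaN N ^ l) ^ N
            - Complex.exp (-(Complex.I * β))) = 0 := by
        rw [hzN]
        ring
      linear_combination hfact + h0
end

section
/- Let N be a positive integer and θ ∈ (0, π/2). If λ ∈ ℂ is an eigenvalue of U_psw(θ), then λ satisfies the equation 1 − (−λ^(−1)/cosθ)^N = (−1)^(N−1)·(1 − (−λ/cosθ)^N). -/
open Complex
open scoped ComplexOrder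

private lemma omega_conj_mul (N : ℕ) [NeZero N] :
    (starRingEnd ℂ) (omegaN N) * omegaN N = 1 := by
  have h : (starRingEnd ℂ) (omegaN N) = Complex.exp (-(2 * Real.pi * Complex.I / N)) := by
    rw [omegaN, ← Complex.exp_conj]
    congr 1
    simp [map_div₀, Complex.conj_I, map_ofNat]
    ring
  rw [h, omegaN, ← Complex.exp_add, neg_add_cancel, Complex.exp_zero]

private lemma omega_pow_conj_mul (N : ℕ) [NeZero N] (k : ℕ) :
    (starRingEnd ℂ) (omegaN N ^ k) * (omegaN N ^ k) = 1 := by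
  rw [map_pow, ← mul_pow, omega_conj_mul, one_pow]

private lemma prod_lin (N : ℕ) [NeZero N] (x β : ℂ) :
    ∏ i ∈ Finset.range N, (x + β * omegaN N ^ i) = x ^ N - (-1) ^ N * β ^ N := by
  have hN : N ≠ 0 := NeZero.ne N
  have hζ : IsPrimitiveRoot (omegaN N) N := Complex.isPrimitiveRoot_exp N hN
  have hroots : Polynomial.nthRoots N ((-β) ^ N) =
      (Multiset.range N).map (fun i => omegaN N ^ i * (-β)) := hζ.nthRoots_eq rfl
  have hmonic : (Polynomial.X ^ N - Polynomial.C ((-β) ^ N)).Monic :=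
    Polynomial.monic_X_pow_sub_C _ hN
  have hfact : ((Polynomial.nthRoots N ((-β) ^ N)).map
      (fun r => Polynomial.X - Polynomial.C r)).prod
      = Polynomial.X ^ N - Polynomial.C ((-β) ^ N) := by
    apply Polynomial.prod_multiset_X_sub_C_of_monic_of_roots_card_eq hmonic
    rw [Polynomial.natDegree_X_pow_sub_C]
    show Multiset.card (Polynomial.nthRoots N ((-β) ^ N)) = N
    rw [hroots]; simp
  have := congrArg (Polynomial.eval x) hfact
  rw [Polynomial.eval_multiset_prod, hroots, Multiset.map_map, Multiset.map_map] at this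
  simp only [Function.comp, Polynomial.eval_sub, Polynomial.eval_X, Polynomial.eval_C,
    Polynomial.eval_pow] at this
  calc ∏ i ∈ Finset.range N, (x + β * omegaN N ^ i)
      = ∏ i ∈ Finset.range N, (x - omegaN N ^ i * (-β)) := by
        apply Finset.prod_congr rfl; intro i _; ring
    _ = ((Multiset.range N).map (fun i => x - omegaN N ^ i * (-β))).prod := by
        rw [Finset.prod_eq_multiset_prod]; rfl
    _ = x ^ N - (-β) ^ N := this
    _ = x ^ N - (-1) ^ N * β ^ N := by rw [neg_pow]

private lemma prod_zmod (N : ℕ) [NeZero N] (f : ℕ → ℂ) :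
    ∏ n : ZMod N, f n.val = ∏ i ∈ Finset.range N, f i := by
  obtain ⟨M, rfl⟩ := Nat.exists_eq_succ_of_ne_zero (NeZero.ne N)
  exact Fin.prod_univ_eq_prod_range (fun i => f i) (M + 1)

private lemma sum_shift (N : ℕ) [NeZero N] (coef : ℂ) (g : ZMod N → ℂ) (n : ZMod N) :
    ∑ m : ZMod N, (coef * if n + 1 = m + 1 then (1 : ℂ) else 0) * g m = coef * g n := by
  rw [Finset.sum_eq_single n]
  · simp
  · intro m _ hm
    rw [if_neg fun hc => hm (add_right_cancel hc).symm, mul_zero, zero_mul]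
  · intro h; exact absurd (Finset.mem_univ n) h

private lemma sum_diag (N : ℕ) [NeZero N] (coef : ℂ) (h g : ZMod N → ℂ) (n : ZMod N) :
    ∑ m : ZMod N, (coef * if n = m then h m else 0) * g m = coef * h n * g n := by
  rw [Finset.sum_eq_single n]
  · simp [mul_assoc]
  · intro m _ hm
    rw [if_neg fun hc => hm hc.symm, mul_zero, zero_mul]
  · intro h; exact absurd (Finset.mem_univ n) h

/-- for positive `N` and `θ ∈ (0, π/2)`, every eigenvalue `λ` of
`U_psw(θ)` satisfies `1 − (−λ⁻¹/cosθ)ᴺ = (−1)^(N−1)·(1 − (−λ/cosθ)ᴺ)`. -/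
theorem psw_eigenvalue_equation (N : ℕ) [NeZero N]
    (θ : ℝ) (hθ : θ ∈ Set.Ioo 0 (Real.pi / 2))
    (lam : ℂ) (hlam : lam ∈ spectrum ℂ (Upsw N θ)) :
    1 - (-(lam⁻¹ / (Real.cos θ : ℂ))) ^ N
      = (-1 : ℂ) ^ (N - 1) * (1 - (-(lam / (Real.cos θ : ℂ))) ^ N) := by
  obtain ⟨hθ0, hθ1⟩ := hθ
  have hcpos : 0 < Real.cos θ := Real.cos_pos_of_mem_Ioo
    ⟨by linarith [Real.pi_pos], hθ1⟩
  have hspos : 0 < Real.sin θ := Real.sin_pos_of_pos_of_lt_pi hθ0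
    (by linarith [Real.pi_pos])
  have hc2 : Real.cos θ ^ 2 < 1 := by nlinarith [Real.sin_sq_add_cos_sq θ]
  -- eigenvector
  have hnu : ¬ IsUnit (algebraMap ℂ (Matrix (Fin 2 × ZMod N) (Fin 2 × ZMod N) ℂ) lam
      - Upsw N θ) := by rwa [spectrum.mem_iff] at hlam
  have hdet : (algebraMap ℂ (Matrix (Fin 2 × ZMod N) (Fin 2 × ZMod N) ℂ) lam
      - Upsw N θ).det = 0 := by
    by_contra h
    exact hnu ((Matrix.isUnit_iff_isUnit_det _).2 (Ne.isUnit h))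
  obtain ⟨v, hvne, hv⟩ := (Matrix.exists_mulVec_eq_zero_iff).2 hdet
  have hUv : (Upsw N θ).mulVec v = lam • v := by
    have h0 : (algebraMap ℂ (Matrix (Fin 2 × ZMod N) (Fin 2 × ZMod N) ℂ) lam).mulVec v
        - (Upsw N θ).mulVec v = 0 := by
      rw [← Matrix.sub_mulVec]; exact hv
    have h2 := sub_eq_zero.mp h0
    rw [Algebra.algebraMap_eq_smul_one, Matrix.smul_mulVec, Matrix.one_mulVec] at h2
    exact h2.symm
  have h10 : ((1 : Fin 2) = 0) = False := by simp [Fin.ext_iff]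
  -- row equations
  have eq1 : ∀ n : ZMod N,
      (Real.cos θ : ℂ) * v (0, n) + (Real.sin θ : ℂ) * v (1, n) = lam * v (0, n + 1) := by
    intro n
    have h := congrFun hUv ((0 : Fin 2), n + 1)
    rw [Matrix.mulVec, dotProduct, Fintype.sum_prod_type, Fin.sum_univ_two] at h
    simp only [Upsw, h10, if_true, if_false, eq_self_iff_true, Pi.smul_apply,
      smul_eq_mul] at h
    rw [sum_shift, sum_shift] at h
    exact h
  have eq2 : ∀ n : ZMod N,
      (Real.sin θ : ℂ) * omegaN N ^ n.val * v (0, n)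
        + (-Real.cos θ : ℂ) * omegaN N ^ n.val * v (1, n) = lam * v (1, n) := by
    intro n
    have h := congrFun hUv ((1 : Fin 2), n)
    rw [Matrix.mulVec, dotProduct, Fintype.sum_prod_type, Fin.sum_univ_two] at h
    simp only [Upsw, h10, if_true, if_false, eq_self_iff_true, Pi.smul_apply,
      smul_eq_mul] at h
    rw [sum_diag, sum_diag] at h
    exact h
  have hcs : (Real.cos θ : ℂ) ^ 2 + (Real.sin θ : ℂ) ^ 2 = 1 := by
    norm_cast
    exact Real.cos_sq_add_sin_sq θ
  -- conjugated row equations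
  have ceq1 : ∀ n : ZMod N,
      (Real.cos θ : ℂ) * (starRingEnd ℂ) (v (0, n))
        + (Real.sin θ : ℂ) * (starRingEnd ℂ) (v (1, n))
        = (starRingEnd ℂ) lam * (starRingEnd ℂ) (v (0, n + 1)) := by
    intro n
    have h := congrArg (starRingEnd ℂ) (eq1 n)
    simp only [map_add, map_mul, Complex.conj_ofReal] at h
    exact h
  have ceq2 : ∀ n : ZMod N,
      (Real.sin θ : ℂ) * (starRingEnd ℂ) (omegaN N ^ n.val) * (starRingEnd ℂ) (v (0, n))
        + (-Real.cos θ : ℂ) * (starRingEnd ℂ) (omegaN N ^ n.val) * (starRingEnd ℂ) (v (1, n))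
        = (starRingEnd ℂ) lam * (starRingEnd ℂ) (v (1, n)) := by
    intro n
    have h := congrArg (starRingEnd ℂ) (eq2 n)
    simp only [map_add, map_mul, map_neg, Complex.conj_ofReal] at h
    exact h
  -- per-site norm conservation
  have key : ∀ n : ZMod N,
      (starRingEnd ℂ) lam * lam *
        ((starRingEnd ℂ) (v (0, n + 1)) * v (0, n + 1)
          + (starRingEnd ℂ) (v (1, n)) * v (1, n))
      = (starRingEnd ℂ) (v (0, n)) * v (0, n)
          + (starRingEnd ℂ) (v (1, n)) * v (1, n) := by
    intro n
    have hW := omega_pow_conj_mul N n.val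
    linear_combination
      (-((starRingEnd ℂ) lam * (starRingEnd ℂ) (v (0, n + 1)))) * eq1 n
      + (-((Real.cos θ : ℂ) * v (0, n) + (Real.sin θ : ℂ) * v (1, n))) * ceq1 n
      + (-((starRingEnd ℂ) lam * (starRingEnd ℂ) (v (1, n)))) * eq2 n
      + (-((Real.sin θ : ℂ) * omegaN N ^ n.val * v (0, n)
            - (Real.cos θ : ℂ) * omegaN N ^ n.val * v (1, n))) * ceq2 n
      + ((Real.sin θ : ℂ) ^ 2 * v (0, n) * (starRingEnd ℂ) (v (0, n))
          - (Real.cos θ : ℂ) * (Real.sin θ : ℂ) * v (0, n) * (starRingEnd ℂ) (v (1, n))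
          - (Real.cos θ : ℂ) * (Real.sin θ : ℂ) * v (1, n) * (starRingEnd ℂ) (v (0, n))
          + (Real.cos θ : ℂ) ^ 2 * v (1, n) * (starRingEnd ℂ) (v (1, n))) * hW
      + (v (0, n) * (starRingEnd ℂ) (v (0, n)) + v (1, n) * (starRingEnd ℂ) (v (1, n))) * hcs
  -- |lam| = 1
  have hE : (∑ n : ZMod N, ((starRingEnd ℂ) (v (0, n)) * v (0, n)
      + (starRingEnd ℂ) (v (1, n)) * v (1, n))) = dotProduct (star v) v := by
    rw [dotProduct, Fintype.sum_prod_type, Fin.sum_univ_two, ← Finset.sum_add_distrib]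
    simp [Complex.star_def]
  have hEne : (∑ n : ZMod N, ((starRingEnd ℂ) (v (0, n)) * v (0, n)
      + (starRingEnd ℂ) (v (1, n)) * v (1, n))) ≠ 0 := by
    rw [hE]
    exact fun h => hvne (dotProduct_star_self_eq_zero.mp h)
  have hsumkey : (starRingEnd ℂ) lam * lam *
      (∑ n : ZMod N, ((starRingEnd ℂ) (v (0, n)) * v (0, n)
        + (starRingEnd ℂ) (v (1, n)) * v (1, n)))
      = ∑ n : ZMod N, ((starRingEnd ℂ) (v (0, n)) * v (0, n)
        + (starRingEnd ℂ) (v (1, n)) * v (1, n)) := by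
    have hshift : (∑ n : ZMod N, ((starRingEnd ℂ) (v (0, n + 1)) * v (0, n + 1)
        + (starRingEnd ℂ) (v (1, n)) * v (1, n)))
        = ∑ n : ZMod N, ((starRingEnd ℂ) (v (0, n)) * v (0, n)
          + (starRingEnd ℂ) (v (1, n)) * v (1, n)) := by
      rw [Finset.sum_add_distrib, Finset.sum_add_distrib]
      congr 1
      exact Fintype.sum_equiv (Equiv.addRight (1 : ZMod N)) _ _ (fun n => rfl)
    calc (starRingEnd ℂ) lam * lam * (∑ n : ZMod N, ((starRingEnd ℂ) (v (0, n)) * v (0, n)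
          + (starRingEnd ℂ) (v (1, n)) * v (1, n)))
        = (starRingEnd ℂ) lam * lam *
            (∑ n : ZMod N, ((starRingEnd ℂ) (v (0, n + 1)) * v (0, n + 1)
              + (starRingEnd ℂ) (v (1, n)) * v (1, n))) := by rw [hshift]
      _ = ∑ n : ZMod N, (starRingEnd ℂ) lam * lam *
            ((starRingEnd ℂ) (v (0, n + 1)) * v (0, n + 1)
              + (starRingEnd ℂ) (v (1, n)) * v (1, n)) := by rw [Finset.mul_sum]
      _ = ∑ n : ZMod N, ((starRingEnd ℂ) (v (0, n)) * v (0, n)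
            + (starRingEnd ℂ) (v (1, n)) * v (1, n)) := Finset.sum_congr rfl fun n _ => key n
  have hmod : (starRingEnd ℂ) lam * lam = 1 := by
    have h2 : ((starRingEnd ℂ) lam * lam - 1) *
        (∑ n : ZMod N, ((starRingEnd ℂ) (v (0, n)) * v (0, n)
          + (starRingEnd ℂ) (v (1, n)) * v (1, n))) = 0 := by
      linear_combination hsumkey
    rcases mul_eq_zero.mp h2 with h | h
    · exact sub_eq_zero.mp h
    · exact absurd h hEne
  -- nonvanishing facts
  have hlam0 : lam ≠ 0 := by
    intro h
    rw [h, mul_zero] at hmod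
    exact zero_ne_one hmod
  have hfac : ∀ n : ZMod N, lam + (Real.cos θ : ℂ) * omegaN N ^ n.val ≠ 0 := by
    intro n h
    have hl : lam = -((Real.cos θ : ℂ) * omegaN N ^ n.val) := by linear_combination h
    have h2 : ((Real.cos θ : ℂ)) ^ 2 *
        ((starRingEnd ℂ) (omegaN N ^ n.val) * omegaN N ^ n.val) = 1 := by
      rw [← hmod, hl]
      simp only [map_neg, map_mul, Complex.conj_ofReal]
      ring
    rw [omega_pow_conj_mul, mul_one] at h2
    have h3 : Real.cos θ ^ 2 = 1 := by exact_mod_cast h2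
    linarith
  -- the transfer recurrence
  have hstar : ∀ n : ZMod N,
      v (0, n) * ((Real.cos θ : ℂ) * lam + omegaN N ^ n.val)
        = lam * v (0, n + 1) * (lam + (Real.cos θ : ℂ) * omegaN N ^ n.val) := by
    intro n
    linear_combination (lam + (Real.cos θ : ℂ) * omegaN N ^ n.val) * eq1 n
      + (Real.sin θ : ℂ) * eq2 n - (omegaN N ^ n.val * v (0, n)) * hcs
  -- no component of a vanishes
  have hzero : (∀ n : ZMod N, v (0, n) = 0) → False := by
    intro hall
    have hb : ∀ n : ZMod N, v (1, n) = 0 := by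
      intro n
      have hthis : v (1, n) * (lam + (Real.cos θ : ℂ) * omegaN N ^ n.val) = 0 := by
        linear_combination (Real.sin θ : ℂ) * omegaN N ^ n.val * hall n - eq2 n
      exact (mul_eq_zero.mp hthis).resolve_right (hfac n)
    apply hvne
    funext p
    obtain ⟨i, n⟩ := p
    fin_cases i
    · exact hall n
    · exact hb n
  have hallzero : (∃ m, v (0, m) = 0) → ∀ n : ZMod N, v (0, n) = 0 := by
    rintro ⟨m, hm⟩ n
    have hstep : ∀ j : ℕ, v (0, m + (j : ZMod N)) = 0 := by
      intro j
      induction j with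
      | zero => simpa using hm
      | succ k ih =>
        have h := hstar (m + (k : ZMod N))
        rw [ih, zero_mul] at h
        rcases mul_eq_zero.mp h.symm with h1 | h2
        · rcases mul_eq_zero.mp h1 with h3 | h4
          · exact absurd h3 hlam0
          · have hcast : m + ((k + 1 : ℕ) : ZMod N) = m + (k : ZMod N) + 1 := by
              push_cast; ring
            rw [hcast]
            exact h4
        · exact absurd h2 (hfac _)
    have h := hstep (n - m).val
    rwa [ZMod.natCast_val, ZMod.cast_id, add_comm, sub_add_cancel] at h
  have hane : ∀ n : ZMod N, v (0, n) ≠ 0 := fun n h0 => hzero (hallzero ⟨n, h0⟩)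
  -- multiply the recurrence around the cycle
  have hpane : (∏ n : ZMod N, v (0, n)) ≠ 0 :=
    Finset.prod_ne_zero_iff.mpr (fun n _ => hane n)
  have h1 : (∏ n : ZMod N, v (0, n)) *
      (∏ n : ZMod N, ((Real.cos θ : ℂ) * lam + omegaN N ^ n.val))
      = (∏ n : ZMod N, v (0, n)) *
        (lam ^ N * ∏ n : ZMod N, (lam + (Real.cos θ : ℂ) * omegaN N ^ n.val)) := by
    calc (∏ n : ZMod N, v (0, n)) *
        (∏ n : ZMod N, ((Real.cos θ : ℂ) * lam + omegaN N ^ n.val))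
        = ∏ n : ZMod N, (v (0, n) * ((Real.cos θ : ℂ) * lam + omegaN N ^ n.val)) :=
          (Finset.prod_mul_distrib).symm
      _ = ∏ n : ZMod N, (lam * v (0, n + 1) *
            (lam + (Real.cos θ : ℂ) * omegaN N ^ n.val)) :=
          Finset.prod_congr rfl fun n _ => hstar n
      _ = (∏ n : ZMod N, (lam * v (0, n + 1))) *
            ∏ n : ZMod N, (lam + (Real.cos θ : ℂ) * omegaN N ^ n.val) :=
          Finset.prod_mul_distrib
      _ = ((∏ _n : ZMod N, lam) * ∏ n : ZMod N, v (0, n + 1)) *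
            ∏ n : ZMod N, (lam + (Real.cos θ : ℂ) * omegaN N ^ n.val) := by
          rw [Finset.prod_mul_distrib]
      _ = (lam ^ N * ∏ n : ZMod N, v (0, n)) *
            ∏ n : ZMod N, (lam + (Real.cos θ : ℂ) * omegaN N ^ n.val) := by
          rw [Finset.prod_const, Finset.card_univ, ZMod.card]
          congr 2
          exact Fintype.prod_equiv (Equiv.addRight (1 : ZMod N)) _ _ (fun n => rfl)
      _ = (∏ n : ZMod N, v (0, n)) *
            (lam ^ N * ∏ n : ZMod N, (lam + (Real.cos θ : ℂ) * omegaN N ^ n.val)) := by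
          ring
  have hP : (∏ n : ZMod N, ((Real.cos θ : ℂ) * lam + omegaN N ^ n.val))
      = lam ^ N * ∏ n : ZMod N, (lam + (Real.cos θ : ℂ) * omegaN N ^ n.val) :=
    mul_left_cancel₀ hpane h1
  -- evaluate the two products
  have hL : (∏ n : ZMod N, ((Real.cos θ : ℂ) * lam + omegaN N ^ n.val))
      = ((Real.cos θ : ℂ) * lam) ^ N - (-1) ^ N := by
    calc (∏ n : ZMod N, ((Real.cos θ : ℂ) * lam + omegaN N ^ n.val))
        = ∏ n : ZMod N, ((Real.cos θ : ℂ) * lam + 1 * omegaN N ^ n.val) := by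
          simp only [one_mul]
      _ = ∏ i ∈ Finset.range N, ((Real.cos θ : ℂ) * lam + 1 * omegaN N ^ i) :=
          prod_zmod N (fun i => (Real.cos θ : ℂ) * lam + 1 * omegaN N ^ i)
      _ = ((Real.cos θ : ℂ) * lam) ^ N - (-1) ^ N * 1 ^ N := prod_lin N _ 1
      _ = ((Real.cos θ : ℂ) * lam) ^ N - (-1) ^ N := by rw [one_pow, mul_one]
  have hR : (∏ n : ZMod N, (lam + (Real.cos θ : ℂ) * omegaN N ^ n.val))
      = lam ^ N - (-1) ^ N * (Real.cos θ : ℂ) ^ N := by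
    calc (∏ n : ZMod N, (lam + (Real.cos θ : ℂ) * omegaN N ^ n.val))
        = ∏ i ∈ Finset.range N, (lam + (Real.cos θ : ℂ) * omegaN N ^ i) :=
          prod_zmod N (fun i => lam + (Real.cos θ : ℂ) * omegaN N ^ i)
      _ = lam ^ N - (-1) ^ N * (Real.cos θ : ℂ) ^ N := prod_lin N _ _
  rw [hL, hR] at hP
  -- final algebra
  have hcne : (Real.cos θ : ℂ) ≠ 0 := Complex.ofReal_ne_zero.mpr (ne_of_gt hcpos)
  obtain ⟨M, rfl⟩ : ∃ M, N = M + 1 := ⟨N - 1, by have := NeZero.ne N; omega⟩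
  simp only [Nat.add_sub_cancel]
  have hs : (-1 : ℂ) ^ M * (-1 : ℂ) ^ M = 1 := by
    rw [← pow_add, ← two_mul, pow_mul]; norm_num
  have h1 : (-(lam⁻¹ / (Real.cos θ : ℂ))) ^ (M + 1) * (lam * (Real.cos θ : ℂ)) ^ (M + 1)
      = (-1 : ℂ) ^ (M + 1) := by
    rw [← mul_pow]
    congr 1
    have e : lam⁻¹ / (Real.cos θ : ℂ) * (lam * (Real.cos θ : ℂ))
        = lam⁻¹ * lam * (((Real.cos θ : ℂ))⁻¹ * (Real.cos θ : ℂ)) := by ring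
    rw [neg_mul, e, inv_mul_cancel₀ hlam0, inv_mul_cancel₀ hcne, mul_one]
  have h2 : (-(lam / (Real.cos θ : ℂ))) ^ (M + 1) * ((Real.cos θ : ℂ)) ^ (M + 1)
      = (-1 : ℂ) ^ (M + 1) * lam ^ (M + 1) := by
    rw [← mul_pow, ← mul_pow]
    congr 1
    rw [neg_mul, div_mul_cancel₀ _ hcne, neg_one_mul]
  apply mul_right_cancel₀ (pow_ne_zero (M + 1) (mul_ne_zero hlam0 hcne))
  linear_combination (-1 : ℂ) * h1 + ((-1 : ℂ) ^ M * lam ^ (M + 1)) * h2 + hP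
    - (lam ^ (M + 1) * lam ^ (M + 1)) * hs
end

section
/- Let N be a positive integer, θ ∈ (0, π/2), ω = exp(2πi/N), and λ ∈ ℂ with |λ| = 1. Suppose complex numbers (a_n)_{n∈ℤ/N} and (b_n)_{n∈ℤ/N} satisfy, for all n, the relations sinθ·a_n − cosθ·b_n = λ·ω^(−n)·b_n and cosθ·a_{n−1} + sinθ·b_{n−1} = λ·a_n (indices mod N). Then for all n ∈ ℤ/Nℤ: (i) b_n·(1 + λω^(−n)/cosθ) = a_n·tanθ, and (ii) a_n·(cosθ + λ·ω^(−n+1)) = a_{n−1}·(λ^(−1) + cosθ·ω^(−n+1)). -/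
open Complex

/-- if `(a_n)` and `(b_n)` (indices in `ℤ/N`) satisfy the eigenvalue
recursions `sinθ·a_n − cosθ·b_n = λ·ω⁻ⁿ·b_n` and
`cosθ·a_{n−1} + sinθ·b_{n−1} = λ·a_n`, with `|λ| = 1` and `θ ∈ (0, π/2)`, then
(i) `b_n·(1 + λω⁻ⁿ/cosθ) = a_n·tanθ` and
(ii) `a_n·(cosθ + λ·ω^(−n+1)) = a_{n−1}·(λ⁻¹ + cosθ·ω^(−n+1))` for all `n`. -/
theorem psw_recursion_consequences (N : ℕ) [NeZero N]
    (θ : ℝ) (hθ : θ ∈ Set.Ioo 0 (Real.pi / 2))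
    (lam : ℂ) (hlam : ‖lam‖ = 1)
    (a b : ZMod N → ℂ)
    (h1 : ∀ n : ZMod N,
      (Real.sin θ : ℂ) * a n - (Real.cos θ : ℂ) * b n
        = lam * (omegaN N)⁻¹ ^ n.val * b n)
    (h2 : ∀ n : ZMod N,
      (Real.cos θ : ℂ) * a (n - 1) + (Real.sin θ : ℂ) * b (n - 1) = lam * a n) :
    ∀ n : ZMod N,
      b n * (1 + lam * (omegaN N)⁻¹ ^ n.val / (Real.cos θ : ℂ))
          = a n * (Real.tan θ : ℂ) ∧
      a n * ((Real.cos θ : ℂ) + lam * (omegaN N)⁻¹ ^ (n - 1).val)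
          = a (n - 1) * (lam⁻¹ + (Real.cos θ : ℂ) * (omegaN N)⁻¹ ^ (n - 1).val) := by
  obtain ⟨hθ0, hθ2⟩ := hθ
  have hπ := Real.pi_pos
  have hc0 : 0 < Real.cos θ := Real.cos_pos_of_mem_Ioo ⟨by linarith, hθ2⟩
  have hc1 : Real.cos θ < 1 := by
    calc Real.cos θ < Real.cos 0 :=
      Real.cos_lt_cos_of_nonneg_of_le_pi le_rfl (by linarith) hθ0
    _ = 1 := Real.cos_zero
  have hcne : (Real.cos θ : ℂ) ≠ 0 := by exact_mod_cast hc0.ne'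
  have hlam0 : lam ≠ 0 := by
    intro h; rw [h] at hlam; simp at hlam
  have habs : ‖omegaN N‖ = 1 := by
    rw [omegaN, show (2 * (Real.pi : ℂ) * Complex.I / N)
        = ((2 * Real.pi / N : ℝ) : ℂ) * Complex.I from by push_cast; ring,
      Complex.norm_exp]
    simp
  have hne : ∀ k : ℕ, (Real.cos θ : ℂ) + lam * (omegaN N)⁻¹ ^ k ≠ 0 := by
    intro k h
    have habsk : ‖lam * (omegaN N)⁻¹ ^ k‖ = 1 := by
      simp [map_mul, map_pow, map_inv₀, habs, hlam]
    have h2 : lam * (omegaN N)⁻¹ ^ k = -(Real.cos θ : ℂ) := by linear_combination h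
    rw [h2, norm_neg, Complex.norm_real, Real.norm_eq_abs, abs_of_pos hc0] at habsk
    linarith
  have hpy : (Real.sin θ : ℂ) ^ 2 + (Real.cos θ : ℂ) ^ 2 = 1 := by
    exact_mod_cast Real.sin_sq_add_cos_sq θ
  have hci : (Real.cos θ : ℂ) * (Real.cos θ : ℂ)⁻¹ = 1 := mul_inv_cancel₀ hcne
  have hli : lam * lam⁻¹ = 1 := mul_inv_cancel₀ hlam0
  intro n
  constructor
  · rw [Real.tan_eq_sin_div_cos, Complex.ofReal_div]
    refine mul_left_cancel₀ hcne ?_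
    linear_combination (-1 : ℂ) * h1 n
      + (b n * lam * (omegaN N)⁻¹ ^ n.val - a n * (Real.sin θ : ℂ)) * hci
  · have e1 := h1 (n - 1)
    have e2 := h2 n
    refine mul_left_cancel₀ hlam0 ?_
    linear_combination (-(((Real.cos θ : ℂ)) + lam * (omegaN N)⁻¹ ^ (n - 1).val)) * e2
      - (Real.sin θ : ℂ) * e1 + a (n - 1) * hpy - a (n - 1) * hli
end

section
/- Let N be an odd positive integer and consider U_psw(0). (i) For every even k = 2l with 0 ≤ l ≤ N−1, the vector v with components v_{(0,n)} = (1/√N)·exp(−2πink/(2N)) and v_{(1,n)} = 0 satisfies U_psw(0)·v = exp(πik/N)·v. (ii) For every odd k with 0 ≤ k ≤ 2N−1, the vector v with components v_{(1,n)} = δ_{n,m} and v_{(0,n)} = 0, where m = (k−N)/2 mod N, satisfies U_psw(0)·v = exp(πik/N)·v. -/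
open Complex

lemma pswRow0 (N : ℕ) [NeZero N] (v : Fin 2 × ZMod N → ℂ) (n : ZMod N) :
    (Upsw N 0).mulVec v (0, n) = v (0, n - 1) := by
  unfold Matrix.mulVec dotProduct Upsw
  rw [Fintype.sum_prod_type, Fin.sum_univ_two]
  simp only [Real.cos_zero, Real.sin_zero, Complex.ofReal_one, Complex.ofReal_zero,
    if_pos rfl, one_mul, zero_mul, mul_zero, Finset.sum_const_zero, add_zero]
  have : ∀ m : ZMod N, (n = m + 1) = (n - 1 = m) := by
    intro m; rw [sub_eq_iff_eq_add]
  simp only [this, ite_mul, one_mul, zero_mul]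
  simp [Finset.sum_ite_eq]

lemma pswRow1 (N : ℕ) [NeZero N] (v : Fin 2 × ZMod N → ℂ) (n : ZMod N) :
    (Upsw N 0).mulVec v (1, n) = -(omegaN N ^ n.val) * v (1, n) := by
  unfold Matrix.mulVec dotProduct Upsw
  rw [Fintype.sum_prod_type, Fin.sum_univ_two]
  simp only [Real.cos_zero, Real.sin_zero, Complex.ofReal_one, Complex.ofReal_zero,
    Complex.ofReal_neg, zero_mul, mul_zero, Finset.sum_const_zero, zero_add]
  norm_num [ite_mul, Finset.sum_ite_eq]

lemma exp_eq_of_int (a b : ℂ) (t : ℤ) (h : a = b + t * (2 * Real.pi * Complex.I)) :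
    Complex.exp a = Complex.exp b := by
  rw [h, Complex.exp_add, Complex.exp_int_mul_two_pi_mul_I, mul_one]

lemma val_intCast_congr (N : ℕ) [NeZero N] (j : ℤ) :
    ∃ s : ℤ, (((j : ZMod N)).val : ℤ) = j + N * s := by
  have h : ((((((j : ZMod N)).val : ℤ) - j : ℤ)) : ZMod N) = 0 := by
    push_cast [ZMod.natCast_val, ZMod.intCast_cast]
    simp [ZMod.intCast_zmod_cast]
  obtain ⟨s, hs⟩ := (ZMod.intCast_zmod_eq_zero_iff_dvd _ N).mp h
  exact ⟨s, by linarith⟩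

/-- eigenvectors of `U_psw(0)` for odd `N`.
(i) For even `k = 2l`, `0 ≤ l ≤ N−1`, the vector supported on coin `0` with
components `(1/√N)·exp(−2πink/(2N))` is an eigenvector with eigenvalue `exp(πik/N)`.
(ii) For odd `k`, `0 ≤ k < 2N`, the vector supported on coin `1`, localized at the
site `(k−N)/2 mod N`, is an eigenvector with eigenvalue `exp(πik/N)`. -/
theorem psw_theta_zero_eigenvectors (N : ℕ) [NeZero N] (hN : Odd N) :
    (∀ l : ℕ, l ≤ N - 1 → ∀ k : ℕ, k = 2 * l →
      ∀ v : Fin 2 × ZMod N → ℂ,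
        (∀ n : ZMod N,
            v (0, n) = (1 / Real.sqrt N : ℂ) *
              Complex.exp (-(2 * Real.pi * Complex.I * n.val * k) / (2 * N)) ∧
            v (1, n) = 0) →
        (Upsw N 0).mulVec v = Complex.exp (Real.pi * Complex.I * k / N) • v) ∧
    (∀ k : ℕ, k < 2 * N → Odd k →
      ∀ v : Fin 2 × ZMod N → ℂ,
        (∀ n : ZMod N,
            v (0, n) = 0 ∧
            v (1, n) = if n = ((((k : ℤ) - N) / 2 : ℤ) : ZMod N) then 1 else 0) →
        (Upsw N 0).mulVec v = Complex.exp (Real.pi * Complex.I * k / N) • v) := by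
  have hN0 : (N : ℂ) ≠ 0 := Nat.cast_ne_zero.mpr (NeZero.ne N)
  constructor
  · intro l hl k hk v hv
    funext p
    obtain ⟨c, n⟩ := p
    fin_cases c <;> simp only [Fin.zero_eta, Fin.mk_one]
    · rw [pswRow0, Pi.smul_apply, smul_eq_mul, (hv (n - 1)).1, (hv n).1]
      -- relate (n-1).val to n.val
      have hcast : (n - 1 : ZMod N) = (((n.val : ℤ) - 1 : ℤ) : ZMod N) := by
        push_cast [ZMod.natCast_val]
        ring
      obtain ⟨s, hs⟩ := val_intCast_congr N ((n.val : ℤ) - 1)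
      rw [← hcast] at hs
      have hsC : (((n - 1 : ZMod N).val : ℕ) : ℂ) = ((n.val : ℂ) - 1) + N * s := by
        exact_mod_cast congrArg (fun z : ℤ => (z : ℂ)) hs
      have key : Complex.exp (-(2 * Real.pi * Complex.I * (((n - 1 : ZMod N)).val : ℂ) * k) / (2 * N))
          = Complex.exp (Real.pi * Complex.I * k / N) *
            Complex.exp (-(2 * Real.pi * Complex.I * ((n.val : ℕ) : ℂ) * k) / (2 * N)) := by
        rw [← Complex.exp_add]
        apply exp_eq_of_int _ _ (-(s * l))
        rw [hsC]
        subst hk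
        push_cast
        field_simp
        ring
      rw [key]
      ring
    · rw [pswRow1, Pi.smul_apply, smul_eq_mul, (hv n).2]
      simp
  · intro k hk hkodd v hv
    funext p
    obtain ⟨c, n⟩ := p
    fin_cases c <;> simp only [Fin.zero_eta, Fin.mk_one]
    · rw [pswRow0, Pi.smul_apply, smul_eq_mul, (hv (n - 1)).1, (hv n).1]
      simp
    · rw [pswRow1, Pi.smul_apply, smul_eq_mul, (hv n).2]
      set j : ℤ := (((k : ℤ) - N) / 2) with hj
      by_cases h : n = ((j : ZMod N))
      · subst h
        simp only [if_pos rfl, if_true, mul_one]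
        have h2 : (2 : ℤ) ∣ ((k : ℤ) - N) := by
          rcases hkodd with ⟨a, ha⟩
          rcases hN with ⟨b, hb⟩
          refine ⟨(a : ℤ) - b, ?_⟩
          subst ha hb; push_cast; ring
        have hjk : 2 * j = (k : ℤ) - N := by
          rw [hj]; exact Int.mul_ediv_cancel' h2
        obtain ⟨s, hs⟩ := val_intCast_congr N j
        have hsC : ((((j : ZMod N)).val : ℕ) : ℂ) = (j : ℂ) + N * s := by
          exact_mod_cast congrArg (fun z : ℤ => (z : ℂ)) hs
        have hjkC : 2 * (j : ℂ) = (k : ℂ) - N := by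
          exact_mod_cast congrArg (fun z : ℤ => (z : ℂ)) hjk
        rw [omegaN, ← Complex.exp_nat_mul]
        have hneg : -Complex.exp (((((j : ZMod N)).val : ℕ) : ℂ) * (2 * Real.pi * Complex.I / N))
            = Complex.exp (Real.pi * Complex.I +
              ((((j : ZMod N)).val : ℕ) : ℂ) * (2 * Real.pi * Complex.I / N)) := by
          rw [Complex.exp_add, Complex.exp_pi_mul_I]
          ring
        rw [hneg]
        apply exp_eq_of_int _ _ s
        have hjC : (j : ℂ) = ((k : ℂ) - N) / 2 := by
          linear_combination hjkC / 2
        rw [hsC, hjC]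
        field_simp
        ring
      · simp [h]
end

section
/- Let N be an odd positive integer and k ∈ {0, 1, …, 2N−1}. Then the vector v ∈ ℂ^(2N) with components v_{(0,n)} = exp(iπ(n² − n − 2nk)/N) and v_{(1,n)} = exp(iπ(n² + n − 2kn − k)/N), for 0 ≤ n ≤ N−1, satisfies U_psw(π/2)·v = exp(πik/N)·v. In particular every component of v has modulus 1. -/
open Complex

noncomputable def Ee (N : ℕ) (a : ℤ) : ℂ := Complex.exp (Complex.I * Real.pi * a / N)

lemma Ee_add (N : ℕ) (a b : ℤ) : Ee N (a + b) = Ee N a * Ee N b := by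
  rw [Ee, Ee, Ee, ← Complex.exp_add]
  congr 1
  push_cast
  ring

lemma Ee_congr (N : ℕ) [NeZero N] {a b : ℤ} (h : a ≡ b [ZMOD (2 * N : ℤ)]) :
    Ee N a = Ee N b := by
  obtain ⟨t, ht⟩ := (Int.modEq_iff_dvd.mp h)
  have hN : (N : ℂ) ≠ 0 := by exact_mod_cast (NeZero.ne N)
  have hb : (a : ℂ) = b + 2 * N * (-t) := by
    have : (a : ℤ) = b + 2 * N * (-t) := by linarith [ht]
    exact_mod_cast congrArg (Int.cast : ℤ → ℂ) this
  rw [Ee, Ee, hb]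
  have : Complex.I * Real.pi * ((b : ℂ) + 2 * N * (-t)) / N
      = Complex.I * Real.pi * b / N + (-t : ℤ) * (2 * Real.pi * Complex.I) := by
    field_simp
    push_cast
    ring
  rw [this, Complex.exp_add, Complex.exp_int_mul_two_pi_mul_I, mul_one]

lemma poly_congr {N : ℕ} (hN : Odd N) {c : ℤ} (hc : Odd c) {a b : ℤ}
    (h : a ≡ b [ZMOD (N : ℤ)]) :
    a ^ 2 + c * a ≡ b ^ 2 + c * b [ZMOD (2 * N : ℤ)] := by
  obtain ⟨t, ht⟩ := Int.modEq_iff_dvd.mp h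
  have hNodd : Odd (N : ℤ) := by exact_mod_cast hN
  have key : Even (t * ((N : ℤ) * t + c)) := by
    rcases Int.even_or_odd t with he | ho
    · exact he.mul_right _
    · exact (Even.mul_left ((hNodd.mul ho).add_odd hc) t)
  obtain ⟨s, hs⟩ := key
  rw [Int.modEq_iff_dvd]
  exact ⟨a * t + s, by linear_combination (b + a + c) * ht + (N:ℤ) * hs + (N:ℤ) * t * ht⟩

lemma row0 (N : ℕ) [NeZero N] (v : Fin 2 × ZMod N → ℂ) (n : ZMod N) :
    (Upsw N (Real.pi / 2)).mulVec v (0, n) = v (1, n - 1) := by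
  simp only [Matrix.mulVec, dotProduct, Fintype.sum_prod_type, Fin.sum_univ_two, Upsw,
    Real.cos_pi_div_two, Real.sin_pi_div_two]
  norm_num
  have hcong : ∀ m : ZMod N, (if n = m + 1 then v (1, m) else 0)
      = (if m = n - 1 then v (1, m) else 0) := by
    intro m
    congr 1
    exact propext ⟨fun h => by rw [h]; ring, fun h => by rw [h]; ring⟩
  rw [Finset.sum_congr rfl (fun m _ => hcong m)]
  simp

lemma row1 (N : ℕ) [NeZero N] (v : Fin 2 × ZMod N → ℂ) (n : ZMod N) :
    (Upsw N (Real.pi / 2)).mulVec v (1, n) = omegaN N ^ n.val * v (0, n) := by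
  simp only [Matrix.mulVec, dotProduct, Fintype.sum_prod_type, Fin.sum_univ_two, Upsw,
    Real.cos_pi_div_two, Real.sin_pi_div_two]
  norm_num

lemma omegaN_pow (N : ℕ) (j : ℕ) : omegaN N ^ j = Ee N (2 * j) := by
  rw [omegaN, Ee, ← Complex.exp_nat_mul]
  congr 1
  push_cast
  ring

/-- for odd `N` and `0 ≤ k < 2N`, the vector with components
`v(0,n) = exp(iπ(n² − n − 2nk)/N)` and `v(1,n) = exp(iπ(n² + n − 2kn − k)/N)` is an
eigenvector of `U_psw(π/2)` with eigenvalue `exp(πik/N)`; every component has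
modulus `1`. -/
theorem psw_theta_pi_half_eigenvectors (N : ℕ) [NeZero N] (hN : Odd N)
    (k : ℕ) (hk : k < 2 * N)
    (v : Fin 2 × ZMod N → ℂ)
    (hv0 : ∀ n : ZMod N,
      v (0, n) = Complex.exp (Complex.I * Real.pi *
        (((n.val : ℤ) ^ 2 - n.val - 2 * n.val * k : ℤ) : ℝ) / N))
    (hv1 : ∀ n : ZMod N,
      v (1, n) = Complex.exp (Complex.I * Real.pi *
        (((n.val : ℤ) ^ 2 + n.val - 2 * k * n.val - k : ℤ) : ℝ) / N)) :
    (Upsw N (Real.pi / 2)).mulVec v = Complex.exp (Real.pi * Complex.I * k / N) • v ∧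
    ∀ p : Fin 2 × ZMod N, ‖v p‖ = 1 := by
  have hE0 : ∀ n : ZMod N, v (0, n) = Ee N ((n.val : ℤ) ^ 2 - n.val - 2 * n.val * k) := by
    intro n
    rw [hv0 n, Ee]
    congr 1
    all_goals push_cast; ring
  have hE1 : ∀ n : ZMod N, v (1, n) = Ee N ((n.val : ℤ) ^ 2 + n.val - 2 * k * n.val - k) := by
    intro n
    rw [hv1 n, Ee]
    congr 1
    all_goals push_cast; ring
  have hlam : Complex.exp (Real.pi * Complex.I * k / N) = Ee N k := by
    rw [Ee]
    congr 1
    push_cast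
    ring
  have hsmul : ∀ p : Fin 2 × ZMod N,
      (Complex.exp (Real.pi * Complex.I * k / N) • v) p = Ee N k * v p := by
    intro p
    rw [Pi.smul_apply, smul_eq_mul, hlam]
  constructor
  · funext p
    obtain ⟨c, n⟩ := p
    fin_cases c
    · show (Upsw N (Real.pi / 2)).mulVec v (0, n)
        = (Complex.exp (Real.pi * Complex.I * k / N) • v) (0, n)
      rw [row0, hsmul, hE1, hE0, ← Ee_add]
      have hab : ((n - 1 : ZMod N).val : ℤ) + 1 ≡ ((n.val : ℤ)) [ZMOD (N : ℤ)] := by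
        rw [← ZMod.intCast_eq_intCast_iff]
        push_cast [ZMod.natCast_val, ZMod.cast_id]
        ring
      set m : ℤ := ((n - 1 : ZMod N).val : ℤ) with hm
      set b : ℤ := ((n.val : ℤ)) with hb
      have h := (poly_congr hN (c := -1 - 2 * k) ⟨-1 - k, by ring⟩ hab).add_right (k : ℤ)
      apply Ee_congr
      have e1 : m ^ 2 + m - 2 * (k : ℤ) * m - k
          = (m + 1) ^ 2 + (-1 - 2 * k) * (m + 1) + k := by ring
      have e2 : (k : ℤ) + (b ^ 2 - b - 2 * b * k)
          = b ^ 2 + (-1 - 2 * k) * b + k := by ring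
      rw [e1, e2]
      exact h
    · show (Upsw N (Real.pi / 2)).mulVec v (1, n)
        = (Complex.exp (Real.pi * Complex.I * k / N) • v) (1, n)
      rw [row1, hsmul, hE0, hE1, omegaN_pow, ← Ee_add, ← Ee_add]
      congr 1
      push_cast
      ring
  · rintro ⟨c, n⟩
    fin_cases c
    · show ‖v (0, n)‖ = 1
      rw [hv0 n]
      have : Complex.I * (Real.pi : ℂ) *
          ((((n.val : ℤ) ^ 2 - n.val - 2 * n.val * k : ℤ) : ℝ) : ℂ) / N
          = ((Real.pi * (((n.val : ℤ) ^ 2 - n.val - 2 * n.val * k : ℤ) : ℝ) / N : ℝ) : ℂ)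
            * Complex.I := by
        push_cast
        ring
      rw [this, Complex.norm_exp_ofReal_mul_I]
    · show ‖v (1, n)‖ = 1
      rw [hv1 n]
      have : Complex.I * (Real.pi : ℂ) *
          ((((n.val : ℤ) ^ 2 + n.val - 2 * k * n.val - k : ℤ) : ℝ) : ℂ) / N
          = ((Real.pi * (((n.val : ℤ) ^ 2 + n.val - 2 * k * n.val - k : ℤ) : ℝ) / N : ℝ) : ℂ)
            * Complex.I := by
        push_cast
        ring
      rw [this, Complex.norm_exp_ofReal_mul_I]
end

section
/- Let N be an odd positive integer, θ ∈ (0, π/2), k ∈ {0, 1, …, 2N−1}, and λ_k = exp(πik/N). Then Σ_{n=0}^{N−1} ( |a_n(λ_k)|² + |b_n(λ_k)|² ) = 2N / (1 + (−1)^k · cos^N θ). -/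
open Complex

lemma sum_inv_one_add {N : ℕ} (hN : Odd N) {ζ : ℂ} (hζ : IsPrimitiveRoot ζ N) {x : ℂ}
    (hx : ‖x‖ < 1) :
    ∑ n ∈ Finset.range N, (1 + x * ζ ^ n)⁻¹ = N / (1 + x ^ N) := by
  have hN0 : N ≠ 0 := hN.pos.ne'
  have habsζ : ‖ζ‖ = 1 := Complex.norm_eq_one_of_pow_eq_one hζ.pow_eq_one hN0
  have hden : ∀ n : ℕ, 1 + x * ζ ^ n ≠ 0 := by
    intro n h
    have h1 : x * ζ ^ n = -1 := by linear_combination h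
    have h2 : ‖x * ζ ^ n‖ = 1 := by rw [h1]; simp
    rw [norm_mul, norm_pow, habsζ, one_pow, mul_one] at h2
    linarith
  have hxN : 1 + x ^ N ≠ 0 := by
    intro h
    have h1 : x ^ N = -1 := by linear_combination h
    have h2 : ‖x ^ N‖ = 1 := by rw [h1]; simp
    rw [norm_pow] at h2
    have := pow_lt_one₀ (norm_nonneg x) hx hN0
    linarith
  have key : ∀ n ∈ Finset.range N, (1 + x ^ N) * (1 + x * ζ ^ n)⁻¹
      = ∑ j ∈ Finset.range N, (-(x * ζ ^ n)) ^ j := by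
    intro n _
    have hr : -(x * ζ ^ n) ≠ 1 := by
      intro h
      exact hden n (by linear_combination -h)
    have hd2 : -(x * ζ ^ n) - 1 ≠ 0 := by
      intro h
      exact hden n (by linear_combination -h)
    have hpow : (-(x * ζ ^ n)) ^ N = -(x ^ N) := by
      rw [neg_pow, hN.neg_one_pow, mul_pow, ← pow_mul, mul_comm n N, pow_mul, hζ.pow_eq_one,
        one_pow, mul_one, neg_one_mul]
    rw [geom_sum_eq hr, hpow]
    field_simp [hden n, hd2]
    ring
  have hmain : (1 + x ^ N) * ∑ n ∈ Finset.range N, (1 + x * ζ ^ n)⁻¹ = N := by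
    rw [Finset.mul_sum, Finset.sum_congr rfl key, Finset.sum_comm]
    have hsplit : ∀ j ∈ Finset.range N, ∑ n ∈ Finset.range N, (-(x * ζ ^ n)) ^ j
        = (-x) ^ j * ∑ n ∈ Finset.range N, (ζ ^ j) ^ n := by
      intro j _
      rw [Finset.mul_sum]
      refine Finset.sum_congr rfl fun n _ => ?_
      rw [show -(x * ζ ^ n) = (-x) * ζ ^ n from by ring, mul_pow, ← pow_mul, mul_comm n j,
        pow_mul]
    rw [Finset.sum_congr rfl hsplit]
    have hz : ∀ j ∈ Finset.range N, (-x) ^ j * ∑ n ∈ Finset.range N, (ζ ^ j) ^ n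
        = if j = 0 then (N : ℂ) else 0 := by
      intro j hj
      rcases Nat.eq_zero_or_pos j with h0 | hpos
      · simp [h0]
      · rw [if_neg hpos.ne']
        have hne1 : ζ ^ j ≠ 1 := hζ.pow_ne_one_of_pos_of_lt hpos.ne' (Finset.mem_range.mp hj)
        rw [geom_sum_eq hne1, ← pow_mul, mul_comm j N, pow_mul, hζ.pow_eq_one, one_pow]
        simp
    rw [Finset.sum_congr rfl hz, Finset.sum_ite_eq' (Finset.range N) 0 (fun _ => (N : ℂ))]
    simp [Finset.mem_range, hN.pos]
  rw [eq_div_iff hxN]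
  linear_combination hmain

lemma pf_lemma {A B γ P Q : ℂ} (hA : A ≠ 0) (hB : B ≠ 0) (hγ : γ ≠ 0)
    (h1 : 1 - γ ^ 2 ≠ 0)
    (hprod : P * Q * γ ^ 2 = A * B)
    (hsum : A + B - A * B = 1 - γ ^ 2) :
    (P * Q)⁻¹ = γ ^ 2 * ((1 - γ ^ 2)⁻¹ * (A⁻¹ + B⁻¹ - 1)) := by
  have hPQ : P * Q = A * B / γ ^ 2 := by
    rw [eq_div_iff (pow_ne_zero 2 hγ)]; exact hprod
  have key : (A * B) * ((1 - γ ^ 2)⁻¹ * (A⁻¹ + B⁻¹ - 1)) = 1 := by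
    field_simp
    linear_combination hsum
  rw [hPQ, inv_div, div_eq_mul_inv, inv_eq_of_mul_eq_one_right key]

set_option maxHeartbeats 1000000 in
/-- for odd `N`, `θ ∈ (0, π/2)`, `0 ≤ k < 2N` and `λ_k = exp(πik/N)`,
`Σ_{n=0}^{N−1} (|a_n(λ_k)|² + |b_n(λ_k)|²) = 2N / (1 + (−1)ᵏ·cosᴺθ)`. -/
theorem psw_normalization_odd (N : ℕ) [NeZero N] (hN : Odd N)
    (θ : ℝ) (hθ : θ ∈ Set.Ioo 0 (Real.pi / 2))
    (k : ℕ) (hk : k < 2 * N)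
    (lam : ℂ) (hlam : lam = Complex.exp (Real.pi * Complex.I * k / N)) :
    ∑ n ∈ Finset.range N,
        (‖aCoef N θ lam n‖ ^ 2 + ‖bCoef N θ lam n‖ ^ 2)
      = 2 * N / (1 + (-1 : ℝ) ^ k * Real.cos θ ^ N) := by
  obtain ⟨hθ0, hθ2⟩ := hθ
  have hπ : 0 < Real.pi := Real.pi_pos
  have hN0 : N ≠ 0 := NeZero.ne N
  have hω : IsPrimitiveRoot (omegaN N) N := Complex.isPrimitiveRoot_exp N hN0
  have hω0 : omegaN N ≠ 0 := Complex.exp_ne_zero _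
  have habsω : ‖omegaN N‖ = 1 :=
    Complex.norm_eq_one_of_pow_eq_one hω.pow_eq_one hN0
  set c := Real.cos θ with hcdef
  have hc0 : 0 < c := Real.cos_pos_of_mem_Ioo ⟨by linarith, hθ2⟩
  have hs0 : 0 < Real.sin θ := Real.sin_pos_of_pos_of_lt_pi hθ0 (by linarith)
  have hsc : Real.sin θ ^ 2 = 1 - c ^ 2 := by
    have := Real.sin_sq_add_cos_sq θ; linarith
  have hc1 : c < 1 := by nlinarith
  have hlam0 : lam ≠ 0 := by rw [hlam]; exact Complex.exp_ne_zero _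
  have hablam : ‖lam‖ = 1 := by
    rw [hlam, show (↑Real.pi * I * ↑k / ↑N : ℂ) = ((Real.pi * k / N : ℝ) : ℂ) * I by
      push_cast; ring]
    exact Complex.norm_exp_ofReal_mul_I _
  have hconjlam : (starRingEnd ℂ) lam = lam⁻¹ := (Complex.inv_eq_conj hablam).symm
  have hconjω : (starRingEnd ℂ) (omegaN N) = (omegaN N)⁻¹ :=
    (Complex.inv_eq_conj habsω).symm
  have hlamN : lam ^ N = (-1 : ℂ) ^ k := by
    rw [hlam, ← Complex.exp_nat_mul,
      show (↑N : ℂ) * (↑Real.pi * I * ↑k / ↑N) = ↑k * (↑Real.pi * I) by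
        have hNc : (N : ℂ) ≠ 0 := Nat.cast_ne_zero.mpr hN0
        field_simp,
      Complex.exp_nat_mul, Complex.exp_pi_mul_I]
  -- denominators
  have habsden : ∀ n : ℕ, ‖lam * (omegaN N)⁻¹ ^ n / (c : ℂ)‖ = 1 / c := by
    intro n
    rw [norm_div, norm_mul, norm_pow, norm_inv, habsω, hablam, Complex.norm_real,
      Real.norm_eq_abs, abs_of_pos hc0]
    simp
  have hden : ∀ n : ℕ, (1 + lam * (omegaN N)⁻¹ ^ n / (c : ℂ)) ≠ 0 := by
    intro n h
    have h1 : lam * (omegaN N)⁻¹ ^ n / (c : ℂ) = -1 := by linear_combination h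
    have h2 : (1:ℝ)/c = 1 := by rw [← habsden n, h1]; simp
    field_simp [hc0.ne'] at h2
    linarith
  have hconjden : ∀ n : ℕ, (1 + lam⁻¹ * omegaN N ^ n / (c : ℂ))
      = (starRingEnd ℂ) (1 + lam * (omegaN N)⁻¹ ^ n / (c : ℂ)) := by
    intro n
    rw [map_add, map_one, map_div₀, map_mul, map_pow, map_inv₀, hconjω, hconjlam, inv_inv,
      Complex.conj_ofReal]
  -- |a_n| = 1
  have ha : ∀ n : ℕ, ‖aCoef N θ lam n‖ = 1 := by
    intro n
    rw [aCoef, ← hcdef, norm_mul, norm_pow, norm_inv, habsω, inv_one, one_pow, one_mul,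
      norm_prod]
    refine Finset.prod_eq_one fun j _ => ?_
    rw [hconjden j, norm_div, Complex.norm_conj, div_self (norm_ne_zero_iff.mpr (hden j))]
  have htanpos : 0 < Real.tan θ := Real.tan_pos_of_pos_of_lt_pi_div_two hθ0 hθ2
  have hb : ∀ n : ℕ, ‖bCoef N θ lam n‖ ^ 2
      = Real.tan θ ^ 2 * (Complex.normSq (1 + lam * (omegaN N)⁻¹ ^ n / (c : ℂ)))⁻¹ := by
    intro n
    rw [bCoef, ← hcdef, norm_div, norm_mul, ha n, one_mul, Complex.norm_real,
      Real.norm_eq_abs, abs_of_pos htanpos, div_pow, Complex.sq_norm, div_eq_mul_inv]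
  -- the sign
  obtain ⟨e, hedef⟩ : ∃ e : ℝ, (-1 : ℝ) ^ k = e := ⟨_, rfl⟩
  rw [hedef]
  have hεC : ((-1 : ℂ)) ^ k = ((e : ℝ) : ℂ) := by rw [← hedef]; push_cast; ring
  have hεinv : ((-1 : ℂ) ^ k)⁻¹ = (-1 : ℂ) ^ k := by
    rcases Nat.even_or_odd k with h | h
    · rw [h.neg_one_pow]; norm_num
    · rw [h.neg_one_pow]; norm_num
  have hlamNinv : (lam⁻¹) ^ N = (-1 : ℂ) ^ k := by rw [inv_pow, hlamN, hεinv]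
  have hcN1 : c ^ N < 1 := pow_lt_one₀ hc0.le hc1 hN0
  have hcN0 : 0 < c ^ N := pow_pos hc0 N
  have hpos : 0 < 1 + e * c ^ N := by
    rw [← hedef]
    rcases Nat.even_or_odd k with h | h
    · rw [h.neg_one_pow]; nlinarith
    · rw [h.neg_one_pow]; nlinarith
  have hposC : (1 : ℂ) + (c : ℂ) ^ N * (e : ℂ) ≠ 0 := by
    rw [show (1 : ℂ) + (c : ℂ) ^ N * (e : ℂ) = ((1 + e * c ^ N : ℝ) : ℂ) by
      push_cast; ring]
    exact_mod_cast hpos.ne'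
  have h1c : (1 : ℂ) - (c : ℂ) ^ 2 ≠ 0 := by
    rw [show (1 : ℂ) - (c : ℂ) ^ 2 = ((1 - c ^ 2 : ℝ) : ℂ) by push_cast; ring]
    exact Complex.ofReal_ne_zero.mpr (by nlinarith)
  have hcc : ((c : ℝ) : ℂ) ≠ 0 := Complex.ofReal_ne_zero.mpr hc0.ne'
  have habcl : ‖(c : ℂ) * lam‖ < 1 := by
    rw [norm_mul, hablam, mul_one, Complex.norm_real, Real.norm_eq_abs, abs_of_pos hc0]; exact hc1
  have habcl' : ‖(c : ℂ) * lam⁻¹‖ < 1 := by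
    rw [norm_mul, norm_inv, hablam, inv_one, mul_one, Complex.norm_real, Real.norm_eq_abs,
      abs_of_pos hc0]
    exact hc1
  have hS1 : ∑ n ∈ Finset.range N, (1 + (c : ℂ) * lam * ((omegaN N) ^ n)⁻¹)⁻¹
      = N / (1 + (c : ℂ) ^ N * (e : ℂ)) := by
    have h := sum_inv_one_add hN hω.inv habcl
    simp only [inv_pow] at h
    rw [h, mul_pow, hlamN, hεC]
  have hS2 : ∑ n ∈ Finset.range N, (1 + (c : ℂ) * lam⁻¹ * (omegaN N) ^ n)⁻¹
      = N / (1 + (c : ℂ) ^ N * (e : ℂ)) := by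
    rw [sum_inv_one_add hN hω habcl', mul_pow, hlamNinv, hεC]
  have hA0 : ∀ n : ℕ, (1 + (c : ℂ) * lam * ((omegaN N) ^ n)⁻¹) ≠ 0 := by
    intro n h
    have h1 : (c : ℂ) * lam * ((omegaN N) ^ n)⁻¹ = -1 := by linear_combination h
    have h2 : ‖(c : ℂ) * lam * ((omegaN N) ^ n)⁻¹‖ = 1 := by rw [h1]; simp
    rw [norm_mul, norm_inv, norm_pow, habsω, one_pow, inv_one, mul_one, norm_mul, hablam,
      mul_one, Complex.norm_real, Real.norm_eq_abs, abs_of_pos hc0] at h2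
    linarith
  have hB0 : ∀ n : ℕ, (1 + (c : ℂ) * lam⁻¹ * (omegaN N) ^ n) ≠ 0 := by
    intro n h
    have h1 : (c : ℂ) * lam⁻¹ * (omegaN N) ^ n = -1 := by linear_combination h
    have h2 : ‖(c : ℂ) * lam⁻¹ * (omegaN N) ^ n‖ = 1 := by rw [h1]; simp
    rw [norm_mul, norm_pow, habsω, one_pow, mul_one, norm_mul, norm_inv, hablam, inv_one,
      mul_one, Complex.norm_real, Real.norm_eq_abs, abs_of_pos hc0] at h2
    linarith
  -- pointwise partial fractions
  have hterm : ∀ n ∈ Finset.range N,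
      (((Complex.normSq (1 + lam * (omegaN N)⁻¹ ^ n / (c : ℂ)) : ℝ) : ℂ))⁻¹
      = (c : ℂ) ^ 2 * ((1 - (c : ℂ) ^ 2)⁻¹ *
          ((1 + (c : ℂ) * lam * ((omegaN N) ^ n)⁻¹)⁻¹
            + (1 + (c : ℂ) * lam⁻¹ * (omegaN N) ^ n)⁻¹ - 1)) := by
    intro n _
    have hωn : (omegaN N) ^ n ≠ 0 := pow_ne_zero n hω0
    rw [Complex.normSq_eq_conj_mul_self, ← hconjden n]
    simp only [inv_pow]
    refine pf_lemma (hA0 n) (hB0 n) hcc h1c ?_ ?_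
    · field_simp
      ring
    · field_simp
      ring
  have hRsum : ∑ n ∈ Finset.range N,
      (((Complex.normSq (1 + lam * (omegaN N)⁻¹ ^ n / (c : ℂ)) : ℝ) : ℂ))⁻¹
      = (c : ℂ) ^ 2 * ((1 - (c : ℂ) ^ 2)⁻¹ *
          (N / (1 + (c : ℂ) ^ N * (e : ℂ)) + N / (1 + (c : ℂ) ^ N * (e : ℂ)) - N)) := by
    rw [Finset.sum_congr rfl hterm, ← Finset.mul_sum, ← Finset.mul_sum]
    rw [Finset.sum_sub_distrib, Finset.sum_add_distrib, hS1, hS2, Finset.sum_const,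
      Finset.card_range, nsmul_eq_mul, mul_one]
  have h1cR : (1 : ℝ) - c ^ 2 ≠ 0 := by nlinarith
  have hrealmul : ((1 - c ^ 2) * (1 + e * c ^ N)) * ∑ n ∈ Finset.range N,
      (Complex.normSq (1 + lam * (omegaN N)⁻¹ ^ n / (c : ℂ)))⁻¹
      = c ^ 2 * N * (1 - e * c ^ N) := by
    apply Complex.ofReal_injective
    push_cast
    rw [hRsum]
    have hu : (1 - (c:ℂ) ^ 2) * (1 - (c:ℂ) ^ 2)⁻¹ = 1 := mul_inv_cancel₀ h1c
    have hv : (1 + (c:ℂ) ^ N * (e:ℂ)) * (1 + (c:ℂ) ^ N * (e:ℂ))⁻¹ = 1 :=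
      mul_inv_cancel₀ hposC
    linear_combination ((c:ℂ) ^ 2 * (2 * (N:ℂ) * (1 + (c:ℂ) ^ N * (e:ℂ)) *
        (1 + (c:ℂ) ^ N * (e:ℂ))⁻¹ - (N:ℂ) * (1 + (c:ℂ) ^ N * (e:ℂ)))) * hu
      + (2 * (N:ℂ) * (c:ℂ) ^ 2) * hv
  have hreal : ∑ n ∈ Finset.range N,
      (Complex.normSq (1 + lam * (omegaN N)⁻¹ ^ n / (c : ℂ)))⁻¹
      = c ^ 2 * N * (1 - e * c ^ N) / ((1 - c ^ 2) * (1 + e * c ^ N)) := by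
    rw [eq_div_iff (mul_ne_zero h1cR hpos.ne')]
    linear_combination hrealmul
  have htan : Real.tan θ ^ 2 = (1 - c ^ 2) / c ^ 2 := by
    rw [Real.tan_eq_sin_div_cos, div_pow, hsc]
  calc ∑ n ∈ Finset.range N,
        (‖aCoef N θ lam n‖ ^ 2 + ‖bCoef N θ lam n‖ ^ 2)
      = ∑ n ∈ Finset.range N, (1 + Real.tan θ ^ 2 *
          (Complex.normSq (1 + lam * (omegaN N)⁻¹ ^ n / (c : ℂ)))⁻¹) := by
        refine Finset.sum_congr rfl fun n _ => ?_
        rw [ha n, hb n, one_pow]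
    _ = N + Real.tan θ ^ 2 * ∑ n ∈ Finset.range N,
          (Complex.normSq (1 + lam * (omegaN N)⁻¹ ^ n / (c : ℂ)))⁻¹ := by
        rw [Finset.sum_add_distrib, Finset.sum_const, Finset.card_range, nsmul_eq_mul,
          mul_one, Finset.mul_sum]
    _ = 2 * N / (1 + e * c ^ N) := by
        rw [hreal, htan]
        rw [eq_div_iff hpos.ne']
        have hu : (c ^ 2) * (c ^ 2)⁻¹ = (1:ℝ) := mul_inv_cancel₀ (by positivity)
        have hw : ((1 - c ^ 2) * (1 + e * c ^ N)) * (((1 - c ^ 2) * (1 + e * c ^ N)))⁻¹ = (1:ℝ) :=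
          mul_inv_cancel₀ (mul_ne_zero h1cR hpos.ne')
        field_simp [hc0.ne', h1cR, hpos.ne']
        ring
end

section
/- Let N be an even positive integer, θ ∈ (0, π/2), α = (1/N)·arccos(cos^N θ), l ∈ {0, …, N−1}, and λ = exp(iα)·ω^l or λ = exp(−iα)·ω^l. Then Σ_{n=0}^{N−1} ( |a_n(λ)|² + |b_n(λ)|² ) = 2N. -/
open Complex

/-- Auxiliary: sum over all `N`-th roots of unity of `1/(1 - a ζⁿ)` equals `N/(1 - aᴺ)`. -/
lemma psw_sum_inv_one_sub_pow {N : ℕ} (hN : N ≠ 0) {ζ : ℂ} (hζ : IsPrimitiveRoot ζ N)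
    {a : ℂ} (ha : a ^ N ≠ 1) :
    ∑ n ∈ Finset.range N, (1 - a * ζ ^ n)⁻¹ = N / (1 - a ^ N) := by
  have hζN : ζ ^ N = 1 := hζ.pow_eq_one
  have hxN : ∀ n : ℕ, (a * ζ ^ n) ^ N = a ^ N := by
    intro n
    rw [mul_pow, ← pow_mul, mul_comm n N, pow_mul, hζN, one_pow, mul_one]
  have haN : (1 : ℂ) - a ^ N ≠ 0 := sub_ne_zero.mpr (Ne.symm ha)
  have hterm : ∀ n : ℕ, (1 - a * ζ ^ n)⁻¹
      = (∑ k ∈ Finset.range N, a ^ k * (ζ ^ k) ^ n) / (1 - a ^ N) := by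
    intro n
    have hx1 : a * ζ ^ n ≠ 1 := fun h => ha (by rw [← hxN n, h, one_pow])
    have hne : (1 : ℂ) - a * ζ ^ n ≠ 0 := sub_ne_zero.mpr (Ne.symm hx1)
    have hg := geom_sum_eq hx1 N
    have hsum : ∑ k ∈ Finset.range N, a ^ k * (ζ ^ k) ^ n
        = ∑ k ∈ Finset.range N, (a * ζ ^ n) ^ k := by
      refine Finset.sum_congr rfl fun k _ => ?_
      rw [mul_pow, ← pow_mul, ← pow_mul, mul_comm k n]
    rw [hsum, hg, hxN]
    rw [eq_div_iff haN, inv_mul_eq_div, div_eq_div_iff hne (sub_ne_zero.mpr hx1)]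
    ring
  rw [Finset.sum_congr rfl fun n _ => hterm n, ← Finset.sum_div]
  rw [Finset.sum_comm]
  have : ∀ k ∈ Finset.range N, (∑ n ∈ Finset.range N, a ^ k * (ζ ^ k) ^ n)
      = if k = 0 then (N : ℂ) else 0 := by
    intro k hk
    rcases Nat.eq_zero_or_pos k with hk0 | hk0
    · simp [hk0]
    · have hk1 : ζ ^ k ≠ 1 := hζ.pow_ne_one_of_pos_of_lt hk0.ne' (Finset.mem_range.mp hk)
      rw [← Finset.mul_sum, geom_sum_eq hk1, ← pow_mul, mul_comm k N, pow_mul, hζN, one_pow]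
      simp [hk0.ne']
  rw [Finset.sum_congr rfl this, Finset.sum_ite_eq' (Finset.range N) 0 (fun _ => (N:ℂ))]
  simp [Finset.mem_range, Nat.pos_of_ne_zero hN]

/-- Auxiliary: partial-fraction evaluation of the key sum over roots of unity. -/
lemma psw_key_complex {N : ℕ} (hN : N ≠ 0) (hNe : Even N) {η z w : ℂ}
    (hη : IsPrimitiveRoot η N)
    (hz : ∀ n : ℕ, 1 + z * η ^ n ≠ 0) (hw' : ∀ n : ℕ, η ^ n + w ≠ 0)
    (hzw : 1 - z * w ≠ 0) (hzN : z ^ N ≠ 1) (hwN : w ^ N ≠ 1) (hw0 : w ≠ 0) :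
    ∑ n ∈ Finset.range N, ((1 + z * η ^ n) * (1 + w * (η ^ n)⁻¹))⁻¹
      = (N : ℂ) / (1 - z * w) * (1 / (1 - z ^ N) + w ^ N / (1 - w ^ N)) := by
  have hη0 : ∀ n : ℕ, η ^ n ≠ 0 := fun n => pow_ne_zero n (hη.ne_zero hN)
  have hwN0 : w ^ N ≠ 0 := pow_ne_zero N hw0
  have h2 : ∀ n : ℕ, 1 + w * (η ^ n)⁻¹ ≠ 0 := by
    intro n h
    have e : (1 + w * (η ^ n)⁻¹) * η ^ n = η ^ n + w := by
      rw [add_mul, one_mul, mul_assoc, inv_mul_cancel₀ (hη0 n), mul_one]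
    exact hw' n (by rw [← e, h, zero_mul])
  have hterm : ∀ n : ℕ, ((1 + z * η ^ n) * (1 + w * (η ^ n)⁻¹))⁻¹
      = (1 - z * w)⁻¹ * (1 - (-z) * η ^ n)⁻¹
        - w * (1 - z * w)⁻¹ * (w⁻¹ * (1 - (-w⁻¹) * η ^ n)⁻¹) := by
    intro n
    have hy0 : η ^ n ≠ 0 := hη0 n
    have hyw : η ^ n + w ≠ 0 := hw' n
    have e1 : 1 - (-z) * η ^ n = 1 + z * η ^ n := by ring
    have e0 : 1 + w * (η ^ n)⁻¹ = (η ^ n + w) * (η ^ n)⁻¹ := by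
      rw [add_mul, mul_inv_cancel₀ hy0]
    have e2 : 1 - (-w⁻¹) * η ^ n = (η ^ n + w) * w⁻¹ := by
      rw [add_mul, mul_inv_cancel₀ hw0]
      ring
    rw [e1, e0, e2, mul_inv, mul_inv, mul_inv, inv_inv, inv_inv]
    field_simp [hz n, hyw, hzw, hw0, hy0]
    ring
  rw [Finset.sum_congr rfl fun n _ => hterm n, Finset.sum_sub_distrib,
    ← Finset.mul_sum, ← Finset.mul_sum, ← Finset.mul_sum]
  have ha1 : (-z) ^ N ≠ 1 := by rwa [hNe.neg_pow]
  have ha2 : (-w⁻¹) ^ N ≠ 1 := by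
    rw [hNe.neg_pow, inv_pow]
    intro h
    exact hwN (by rw [← inv_inv (w ^ N), h, inv_one])
  rw [psw_sum_inv_one_sub_pow hN hη ha1, psw_sum_inv_one_sub_pow hN hη ha2,
    hNe.neg_pow, hNe.neg_pow, inv_pow]
  have d1 : 1 - z ^ N ≠ 0 := sub_ne_zero.mpr (Ne.symm hzN)
  have d2 : 1 - w ^ N ≠ 0 := sub_ne_zero.mpr (Ne.symm hwN)
  have e3 : 1 - (w ^ N)⁻¹ = (w ^ N - 1) * (w ^ N)⁻¹ := by field_simp
  have d3 : w ^ N - 1 ≠ 0 := sub_ne_zero.mpr hwN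
  rw [e3]
  field_simp
  ring

/-- for even positive `N`, `θ ∈ (0, π/2)`, `α = (1/N)·arccos(cosᴺθ)`,
and `λ = exp(±iα)·ωˡ` with `0 ≤ l ≤ N−1`,
`Σ_{n=0}^{N−1} (|a_n(λ)|² + |b_n(λ)|²) = 2N`. -/
theorem psw_normalization_even (N : ℕ) [NeZero N] (hN : Even N)
    (θ : ℝ) (hθ : θ ∈ Set.Ioo 0 (Real.pi / 2))
    (α : ℝ) (hα : α = Real.arccos (Real.cos θ ^ N) / N)
    (l : ℕ) (hl : l ≤ N - 1)
    (lam : ℂ)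
    (hlam : lam = Complex.exp (Complex.I * α) * omegaN N ^ l ∨
            lam = Complex.exp (-(Complex.I * α)) * omegaN N ^ l) :
    ∑ n ∈ Finset.range N,
        (‖aCoef N θ lam n‖ ^ 2 + ‖bCoef N θ lam n‖ ^ 2)
      = 2 * N := by
  obtain ⟨hθ0, hθ1⟩ := hθ
  have hπ : 0 < Real.pi := Real.pi_pos
  have hNz : N ≠ 0 := NeZero.ne N
  set c : ℝ := Real.cos θ with hc
  have hc0 : 0 < c := Real.cos_pos_of_mem_Ioo ⟨by linarith, hθ1⟩
  have hc1 : c < 1 := by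
    have := Real.cos_lt_cos_of_nonneg_of_le_pi le_rfl (by linarith) hθ0
    simpa using this
  have hsin : 0 < Real.sin θ := Real.sin_pos_of_pos_of_lt_pi hθ0 (by linarith)
  have htanpos : 0 < Real.tan θ := Real.tan_pos_of_pos_of_lt_pi_div_two hθ0 hθ1
  set ω : ℂ := omegaN N with hωdef
  have hprim : IsPrimitiveRoot ω N := Complex.isPrimitiveRoot_exp N hNz
  have hω1 : ω ^ N = 1 := hprim.pow_eq_one
  have hω0 : ω ≠ 0 := hprim.ne_zero hNz
  have hωabs : ‖ω‖ = 1 := Complex.norm_eq_one_of_pow_eq_one hω1 hNz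
  have hlabs : ‖lam‖ = 1 := by
    rcases hlam with h | h <;> rw [h, norm_mul, norm_pow, hωabs, Complex.norm_exp] <;>
      simp [Complex.mul_re]
  have hlam0 : lam ≠ 0 := by
    intro h; rw [h] at hlabs; simp at hlabs
  have hcC : (c : ℂ) ≠ 0 := Complex.ofReal_ne_zero.mpr hc0.ne'
  -- conjugation facts
  have hconjl : (starRingEnd ℂ) lam = lam⁻¹ := by
    rw [Complex.inv_eq_conj (by exact hlabs)]
  have hconjω : (starRingEnd ℂ) ω = ω⁻¹ := by
    rw [Complex.inv_eq_conj (by exact hωabs)]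
  -- nonvanishing of denominators
  have hne : ∀ v : ℂ, ‖v‖ = 1 → (1 : ℂ) + v / (c : ℂ) ≠ 0 := by
    intro v hv h
    have hveq : v / (c : ℂ) = -1 := by linear_combination h
    have h2 : ‖v / (c : ℂ)‖ = 1 / c := by
      rw [norm_div, hv, Complex.norm_real, Real.norm_eq_abs, abs_of_pos hc0]
    rw [hveq] at h2
    simp at h2
    linarith
  have huA : ∀ j : ℕ, ‖lam⁻¹ * ω ^ j‖ = 1 := by
    intro j; rw [norm_mul, norm_inv, norm_pow, hlabs, hωabs]; simp
  have huB : ∀ j : ℕ, ‖lam * ω⁻¹ ^ j‖ = 1 := by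
    intro j; rw [norm_mul, norm_pow, norm_inv, hlabs, hωabs]; simp
  -- |a_n| = 1
  have ha : ∀ n : ℕ, ‖aCoef N θ lam n‖ = 1 := by
    intro n
    unfold aCoef
    rw [norm_mul, norm_pow, norm_inv, ← hωdef, hωabs, inv_one, one_pow, one_mul, norm_prod]
    apply Finset.prod_eq_one
    intro j _
    have hnum : (1 : ℂ) + lam⁻¹ * ω ^ j / (c : ℂ) ≠ 0 := by
      exact hne _ (huA j)
    have hconj : (starRingEnd ℂ) (1 + lam⁻¹ * ω ^ j / (c : ℂ))
        = 1 + lam * ω⁻¹ ^ j / (c : ℂ) := by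
      rw [map_add, map_one, map_div₀, map_mul, map_inv₀, map_pow, hconjl, hconjω,
        Complex.conj_ofReal, inv_inv]
    rw [norm_div, ← hconj, Complex.norm_conj]
    exact div_self (norm_ne_zero_iff.mpr hnum)
  -- |b_n|²
  have hb : ∀ n : ℕ, ‖bCoef N θ lam n‖ ^ 2
      = Real.tan θ ^ 2 * ((‖1 + lam * ω⁻¹ ^ n / (c : ℂ)‖) ^ 2)⁻¹ := by
    intro n
    unfold bCoef
    rw [norm_div, norm_mul, ha n, one_mul, Complex.norm_real, Real.norm_eq_abs, abs_of_pos htanpos, ← hωdef,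
      div_pow, div_eq_mul_inv]
  -- λ^N facts
  have hωl : (ω ^ l) ^ N = 1 := by rw [← pow_mul, mul_comm l N, pow_mul, hω1, one_pow]
  have hcN1 : c ^ N ≤ 1 := pow_le_one₀ hc0.le hc1.le
  have hcN0 : 0 < c ^ N := pow_pos hc0 N
  have hcos : Real.cos ((N : ℝ) * α) = c ^ N := by
    rw [hα, mul_div_cancel₀ _ (by exact_mod_cast hNz : (N:ℝ) ≠ 0)]
    exact Real.cos_arccos (by linarith) hcN1
  have hPdef : lam ^ N = Complex.exp ((((N : ℝ) * α : ℝ) : ℂ) * I) ∨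
      lam ^ N = Complex.exp (-((((N : ℝ) * α : ℝ) : ℂ) * I)) := by
    rcases hlam with h | h
    · left
      rw [h, mul_pow, hωl, mul_one, ← Complex.exp_nat_mul]
      congr 1
      push_cast
      ring
    · right
      rw [h, mul_pow, hωl, mul_one, ← Complex.exp_nat_mul]
      congr 1
      push_cast
      ring
  have hP : lam ^ N + (lam ^ N)⁻¹ = 2 * (c : ℂ) ^ N := by
    have h2cos : Complex.exp ((((N : ℝ) * α : ℝ) : ℂ) * I)
        + Complex.exp (-((((N : ℝ) * α : ℝ) : ℂ) * I)) = 2 * (c : ℂ) ^ N := by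
      rw [show -((((N : ℝ) * α : ℝ) : ℂ) * I) = (-(((N : ℝ) * α : ℝ) : ℂ)) * I by ring]
      rw [show Complex.exp ((((N : ℝ) * α : ℝ) : ℂ) * I)
            + Complex.exp ((-(((N : ℝ) * α : ℝ) : ℂ)) * I)
          = 2 * Complex.cos ((((N : ℝ) * α : ℝ) : ℂ)) by rw [Complex.cos]; ring]
      rw [← Complex.ofReal_cos, hcos]
      push_cast
      ring
    rcases hPdef with h | h <;> rw [h, ← Complex.exp_neg]
    · exact h2cos
    · rw [neg_neg, add_comm]
      exact h2cos
  have hP0 : lam ^ N ≠ 0 := pow_ne_zero N hlam0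
  -- hypotheses for the key complex sum
  have hprim' : IsPrimitiveRoot ω⁻¹ N := hprim.inv
  have habsinv : ‖ω⁻¹‖ = 1 := by rw [norm_inv, hωabs, inv_one]
  have hw0 : lam⁻¹ / (c : ℂ) ≠ 0 := div_ne_zero (inv_ne_zero hlam0) hcC
  have hzn : ∀ n : ℕ, (1 : ℂ) + lam / (c : ℂ) * (ω⁻¹) ^ n ≠ 0 := by
    intro n
    have h := hne _ (huB n)
    rw [show lam / (c : ℂ) * (ω⁻¹) ^ n = lam * ω⁻¹ ^ n / (c : ℂ) by ring]
    exact h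
  have hwn' : ∀ n : ℕ, (ω⁻¹) ^ n + lam⁻¹ / (c : ℂ) ≠ 0 := by
    intro n h
    have h1 : (ω⁻¹) ^ n = -(lam⁻¹ / (c : ℂ)) := by linear_combination h
    have h2 := congrArg (‖·‖) h1
    rw [norm_pow, habsinv, one_pow, norm_neg, norm_div, norm_inv, hlabs,
      Complex.norm_real, Real.norm_eq_abs, abs_of_pos hc0, inv_one, eq_div_iff hc0.ne', one_mul] at h2
    linarith
  have hzwv : lam / (c : ℂ) * (lam⁻¹ / (c : ℂ)) = (((c ^ 2)⁻¹ : ℝ) : ℂ) := by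
    push_cast
    field_simp
  have hc2 : c ^ 2 < 1 := by nlinarith
  have hc2inv : (1 : ℝ) < (c ^ 2)⁻¹ := by
    have hp : (0:ℝ) < c ^ 2 := pow_pos hc0 2
    nlinarith [mul_inv_cancel₀ hp.ne', inv_pos.mpr hp]
  have hzw : (1 : ℂ) - lam / (c : ℂ) * (lam⁻¹ / (c : ℂ)) ≠ 0 := by
    rw [hzwv, show (1 : ℂ) - (((c ^ 2)⁻¹ : ℝ) : ℂ) = (((1 - (c ^ 2)⁻¹ : ℝ)) : ℂ) by push_cast; ring,
      Complex.ofReal_ne_zero]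
    linarith
  have habspow : ∀ u : ℂ, ‖u‖ = 1 → (u / (c : ℂ)) ^ N ≠ 1 := by
    intro u hu h
    have h2 := congrArg (‖·‖) h
    rw [norm_pow, norm_div, hu, Complex.norm_real, Real.norm_eq_abs, abs_of_pos hc0, norm_one] at h2
    have h3 : (1 : ℝ) < (1 / c) ^ N := one_lt_pow₀ (by rw [lt_div_iff₀ hc0]; linarith) hNz
    linarith
  have hzN : (lam / (c : ℂ)) ^ N ≠ 1 := habspow lam hlabs
  have hwN : (lam⁻¹ / (c : ℂ)) ^ N ≠ 1 := habspow lam⁻¹ (by rw [norm_inv, hlabs, inv_one])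
  have hsumC := psw_key_complex hNz hN hprim' hzn hwn' hzw hzN hwN hw0
  -- identify each complex term with the squared modulus
  have hd : ∀ n : ℕ, ((1 + lam / (c:ℂ) * (ω⁻¹) ^ n) * (1 + lam⁻¹ / (c:ℂ) * ((ω⁻¹) ^ n)⁻¹))
      = ((‖1 + lam * ω⁻¹ ^ n / (c:ℂ)‖ ^ 2 : ℝ) : ℂ) := by
    intro n
    have e1 : 1 + lam / (c:ℂ) * (ω⁻¹) ^ n = 1 + lam * ω⁻¹ ^ n / (c:ℂ) := by ring
    have e2 : 1 + lam⁻¹ / (c:ℂ) * ((ω⁻¹) ^ n)⁻¹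
        = (starRingEnd ℂ) (1 + lam * ω⁻¹ ^ n / (c:ℂ)) := by
      have einv : ((ω⁻¹ : ℂ) ^ n)⁻¹ = ω ^ n := by rw [inv_pow, inv_inv]
      rw [einv, map_add, map_one, map_div₀, map_mul, map_pow, map_inv₀, hconjl, hconjω,
        Complex.conj_ofReal, inv_inv]
      ring
    rw [e1, e2, Complex.mul_conj, Complex.sq_norm]
  -- algebraic facts about P = lam ^ N
  have hD0 : ((c:ℂ)) ^ N ≠ 0 := pow_ne_zero N hcC
  have hPP : lam ^ N * lam ^ N + 1 = 2 * (c:ℂ) ^ N * lam ^ N := by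
    have h := hP
    field_simp at h
    linear_combination h
  have h1 : (1:ℂ) - lam ^ N / (c:ℂ) ^ N ≠ 0 := by
    rw [← div_pow]
    exact sub_ne_zero.mpr (Ne.symm hzN)
  have h2 : (1:ℂ) - (lam ^ N)⁻¹ / (c:ℂ) ^ N ≠ 0 := by
    rw [← inv_pow, ← div_pow]
    exact sub_ne_zero.mpr (Ne.symm hwN)
  have h1' : (c:ℂ) ^ N - lam ^ N ≠ 0 := by
    intro h0
    apply h1
    rw [← sub_eq_zero.mp h0, div_self hD0, sub_self]
  have h2' : (c:ℂ) ^ N * lam ^ N - 1 ≠ 0 := by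
    intro h0
    apply h2
    have h3 : (c:ℂ) ^ N * lam ^ N = 1 := sub_eq_zero.mp h0
    have h4 : (lam ^ N)⁻¹ = (c:ℂ) ^ N := by
      field_simp
      linear_combination -h3
    rw [h4, div_self hD0, sub_self]
  have h2'' : (-1 : ℂ) + (c:ℂ) ^ N * lam ^ N ≠ 0 := by
    intro h0
    exact h2' (by linear_combination h0)
  have hDinv : (c:ℂ) ^ N * ((c:ℂ) ^ N)⁻¹ = 1 := mul_inv_cancel₀ hD0
  have hbr : 1 / (1 - lam ^ N / (c:ℂ) ^ N)
      + ((lam ^ N)⁻¹ / (c:ℂ) ^ N) / (1 - (lam ^ N)⁻¹ / (c:ℂ) ^ N) = -1 := by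
    rw [div_add_div _ _ h1 h2, div_eq_iff (mul_ne_zero h1 h2)]
    linear_combination (-(((c:ℂ) ^ N)⁻¹)) * hP - 2 * hDinv
  have hcC2 : (1:ℂ) - ((c ^ 2 : ℝ) : ℂ)⁻¹ ≠ 0 := by
    rw [show (1:ℂ) - (((c ^ 2 : ℝ)) : ℂ)⁻¹ = (((1 - (c ^ 2)⁻¹ : ℝ)) : ℂ) by push_cast; ring,
      Complex.ofReal_ne_zero]
    linarith
  -- the real sum
  have hsumR : ∑ n ∈ Finset.range N, ((‖1 + lam * ω⁻¹ ^ n / (c:ℂ)‖) ^ 2)⁻¹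
      = N * c ^ 2 / (1 - c ^ 2) := by
    apply Complex.ofReal_injective
    rw [Complex.ofReal_sum]
    have hterm : ∀ n ∈ Finset.range N,
        (((‖1 + lam * ω⁻¹ ^ n / (c:ℂ)‖ ^ 2)⁻¹ : ℝ) : ℂ)
          = ((1 + lam / (c:ℂ) * (ω⁻¹) ^ n) * (1 + lam⁻¹ / (c:ℂ) * ((ω⁻¹) ^ n)⁻¹))⁻¹ := by
      intro n _
      rw [Complex.ofReal_inv, hd n]
    rw [Finset.sum_congr rfl hterm, hsumC, hzwv, div_pow, div_pow, inv_pow, hbr]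
    have h1c : (1:ℝ) - c ^ 2 ≠ 0 := by linarith
    have h1cC : (1:ℂ) - ((c:ℂ)) ^ 2 ≠ 0 := by
      rw [show (1:ℂ) - ((c:ℂ)) ^ 2 = (((1 - c ^ 2 : ℝ)) : ℂ) by push_cast; ring,
        Complex.ofReal_ne_zero]
      exact h1c
    have hne1 : (1 : ℝ) - (c ^ 2)⁻¹ ≠ 0 := by linarith
    rw [show ((N:ℂ) / (1 - (((c ^ 2)⁻¹ : ℝ) : ℂ)) * (-1)) =
        (((N / (1 - (c ^ 2)⁻¹) * (-1) : ℝ)) : ℂ) by push_cast; ring]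
    have hre : (N / (1 - (c ^ 2)⁻¹) * (-1) : ℝ) = N * c ^ 2 / (1 - c ^ 2) := by
      rw [div_mul_eq_mul_div, div_eq_div_iff hne1 h1c]
      field_simp
      ring
    rw [hre]
  -- final assembly
  have hsummand : ∀ n ∈ Finset.range N,
      ‖aCoef N θ lam n‖ ^ 2 + ‖bCoef N θ lam n‖ ^ 2
        = 1 + Real.tan θ ^ 2 * ((‖1 + lam * ω⁻¹ ^ n / (c:ℂ)‖) ^ 2)⁻¹ := by
    intro n _
    rw [ha n, one_pow, hb n]
  rw [Finset.sum_congr rfl hsummand, Finset.sum_add_distrib, Finset.sum_const,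
    ← Finset.mul_sum, hsumR]
  have h1c : (1:ℝ) - c ^ 2 ≠ 0 := by linarith
  have htanval : Real.tan θ ^ 2 * ((N:ℝ) * c ^ 2 / (1 - c ^ 2)) = N := by
    rw [Real.tan_eq_sin_div_cos, div_pow, Real.sin_sq, ← hc, div_mul_div_comm,
      show (1 - c ^ 2) * ((N:ℝ) * c ^ 2) = (N:ℝ) * (c ^ 2 * (1 - c ^ 2)) by ring]
    exact mul_div_cancel_right₀ _ (mul_ne_zero (pow_ne_zero 2 hc0.ne') h1c)
  rw [htanval]
  simp [Finset.card_range, nsmul_eq_mul]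
  ring
end

section
/- Let N be an odd positive integer, θ ∈ (0, π/2), k ∈ {0, 1, …, 2N−1}, and λ_k = exp(πik/N). Then Σ_{n=0}^{N−1} a_n(λ_k)·conj(b_n(λ_k)) = (−1)^k · N · tanθ · cos^N θ / (1 + (−1)^k · cos^N θ). -/
open Complex

lemma omegaN_prim (N : ℕ) [NeZero N] : IsPrimitiveRoot (omegaN N) N :=
  Complex.isPrimitiveRoot_exp N (NeZero.ne N)

lemma omegaN_pow_self (N : ℕ) [NeZero N] : omegaN N ^ N = 1 :=
  (omegaN_prim N).pow_eq_one

lemma abs_omegaN (N : ℕ) : ‖omegaN N‖ = 1 := by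
  rw [omegaN, show (2 * (Real.pi : ℂ) * Complex.I / (N : ℂ))
      = ((2 * Real.pi / N : ℝ) : ℂ) * Complex.I by push_cast; ring,
    Complex.norm_exp_ofReal_mul_I]

lemma conj_omegaN (N : ℕ) : (starRingEnd ℂ) (omegaN N) = (omegaN N)⁻¹ :=
  (Complex.inv_eq_conj (by rw [abs_omegaN])).symm

lemma omegaN_ne_zero (N : ℕ) : omegaN N ≠ 0 := Complex.exp_ne_zero _

/-- Key sum identity: `Σ_{n<N} 1/(1 - zωⁿ) = N/(1 - zᴺ)`. -/
lemma sum_inv_one_sub (N : ℕ) [NeZero N] (z : ℂ)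
    (hz : ∀ n : ℕ, 1 - z * omegaN N ^ n ≠ 0) (hzN : 1 - z ^ N ≠ 0) :
    ∑ n ∈ Finset.range N, (1 - z * omegaN N ^ n)⁻¹ = (N : ℂ) / (1 - z ^ N) := by
  have hω : omegaN N ^ N = 1 := omegaN_pow_self N
  have hterm : ∀ n ∈ Finset.range N, (1 - z * omegaN N ^ n)⁻¹
      = (∑ j ∈ Finset.range N, (z * omegaN N ^ n) ^ j) / (1 - z ^ N) := by
    intro n _
    have h1 := geom_sum_mul (z * omegaN N ^ n) N
    have h2 : (z * omegaN N ^ n) ^ N = z ^ N := by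
      rw [mul_pow, ← pow_mul, mul_comm n N, pow_mul, hω, one_pow, mul_one]
    rw [h2] at h1
    rw [inv_eq_one_div, div_eq_div_iff (hz n) hzN]
    linear_combination h1
  rw [Finset.sum_congr rfl hterm, ← Finset.sum_div]
  congr 1
  have hswap : ∑ n ∈ Finset.range N, ∑ j ∈ Finset.range N, (z * omegaN N ^ n) ^ j
      = ∑ j ∈ Finset.range N, z ^ j * ∑ n ∈ Finset.range N, (omegaN N ^ j) ^ n := by
    rw [Finset.sum_comm]
    refine Finset.sum_congr rfl fun j _ => ?_
    rw [Finset.mul_sum]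
    refine Finset.sum_congr rfl fun n _ => ?_
    rw [mul_pow, ← pow_mul, ← pow_mul, mul_comm n j]
  rw [hswap]
  have hin : ∀ j ∈ Finset.range N, z ^ j * ∑ n ∈ Finset.range N, (omegaN N ^ j) ^ n
      = if j = 0 then (N : ℂ) else 0 := by
    intro j hj
    rcases eq_or_ne j 0 with rfl | hj0
    · simp
    · rw [if_neg hj0]
      have hζ1 : omegaN N ^ j ≠ 1 :=
        (omegaN_prim N).pow_ne_one_of_pos_of_lt hj0
          (Finset.mem_range.mp hj)
      have h1 := geom_sum_mul (omegaN N ^ j) N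
      have h2 : (omegaN N ^ j) ^ N = 1 := by
        rw [← pow_mul, mul_comm, pow_mul, hω, one_pow]
      rw [h2, sub_self] at h1
      have h3 : (∑ n ∈ Finset.range N, (omegaN N ^ j) ^ n) = 0 :=
        (mul_eq_zero.mp h1).resolve_right (sub_ne_zero.mpr hζ1)
      rw [h3, mul_zero]
  rw [Finset.sum_congr rfl hin]
  simp [Finset.sum_ite_eq', Nat.pos_of_ne_zero (NeZero.ne N)]

/-- for odd `N`, `θ ∈ (0, π/2)`, `0 ≤ k < 2N` and `λ_k = exp(πik/N)`,
`Σ_{n=0}^{N−1} a_n(λ_k)·conj(b_n(λ_k)) = (−1)ᵏ·N·tanθ·cosᴺθ / (1 + (−1)ᵏ·cosᴺθ)`. -/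
theorem psw_offdiag_sum (N : ℕ) [NeZero N] (hN : Odd N)
    (θ : ℝ) (hθ : θ ∈ Set.Ioo 0 (Real.pi / 2))
    (k : ℕ) (hk : k < 2 * N)
    (lam : ℂ) (hlam : lam = Complex.exp (Real.pi * Complex.I * k / N)) :
    ∑ n ∈ Finset.range N, aCoef N θ lam n * (starRingEnd ℂ) (bCoef N θ lam n)
      = (-1 : ℂ) ^ k * N * (Real.tan θ : ℂ) * (Real.cos θ : ℂ) ^ N
          / (1 + (-1 : ℂ) ^ k * (Real.cos θ : ℂ) ^ N) := by
  obtain ⟨hθ0, hθ1⟩ := hθ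
  have hπ := Real.pi_pos
  have hc0 : 0 < Real.cos θ := Real.cos_pos_of_mem_Ioo ⟨by linarith, hθ1⟩
  have hc1 : Real.cos θ < 1 := by
    have := Real.cos_lt_cos_of_nonneg_of_le_pi (le_refl 0) (by linarith) hθ0
    rwa [Real.cos_zero] at this
  have hcC : ((Real.cos θ : ℝ) : ℂ) ≠ 0 := by
    exact_mod_cast ne_of_gt hc0
  have hlam_abs : ‖lam‖ = 1 := by
    rw [hlam, show ((Real.pi : ℂ) * Complex.I * k / N)
        = ((Real.pi * k / N : ℝ) : ℂ) * Complex.I by push_cast; ring,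
      Complex.norm_exp_ofReal_mul_I]
  have hconj_lam : (starRingEnd ℂ) lam = lam⁻¹ :=
    (Complex.inv_eq_conj (by rw [hlam_abs])).symm
  -- nonzero denominators
  have habs1 : ∀ u : ℂ, ‖u‖ = 1 → 1 + u / (Real.cos θ : ℂ) ≠ 0 := by
    intro u hu h
    have h2 : u / (Real.cos θ : ℂ) = -1 := by linear_combination h
    rw [div_eq_iff hcC] at h2
    have hu' : u = -(Real.cos θ : ℂ) := by linear_combination h2
    rw [hu'] at hu
    simp only [norm_neg, Complex.norm_real, Real.norm_eq_abs, abs_of_pos hc0] at hu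
    linarith
  have hnum : ∀ j : ℕ, 1 + lam⁻¹ * omegaN N ^ j / (Real.cos θ : ℂ) ≠ 0 := by
    intro j
    refine habs1 _ ?_
    rw [norm_mul, norm_inv, hlam_abs, inv_one, one_mul, norm_pow, abs_omegaN, one_pow]
  have hden : ∀ j : ℕ, 1 + lam * (omegaN N)⁻¹ ^ j / (Real.cos θ : ℂ) ≠ 0 := by
    intro j
    refine habs1 _ ?_
    rw [norm_mul, hlam_abs, one_mul, norm_pow, norm_inv, abs_omegaN, inv_one, one_pow]
  -- conj of the factors
  have hconjfac : ∀ j : ℕ,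
      (starRingEnd ℂ) (1 + lam * (omegaN N)⁻¹ ^ j / (Real.cos θ : ℂ))
        = 1 + lam⁻¹ * omegaN N ^ j / (Real.cos θ : ℂ) := by
    intro j
    simp only [map_add, map_one, map_mul, map_div₀, map_pow, map_inv₀, hconj_lam,
      conj_omegaN, inv_inv, Complex.conj_ofReal]
  have hconjfac' : ∀ j : ℕ,
      (starRingEnd ℂ) (1 + lam⁻¹ * omegaN N ^ j / (Real.cos θ : ℂ))
        = 1 + lam * (omegaN N)⁻¹ ^ j / (Real.cos θ : ℂ) := by
    intro j
    simp only [map_add, map_one, map_mul, map_div₀, map_pow, map_inv₀, hconj_lam,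
      conj_omegaN, inv_inv, Complex.conj_ofReal]
  -- a_n · conj(a_n) = 1
  have hconj_a : ∀ n : ℕ, aCoef N θ lam n * (starRingEnd ℂ) (aCoef N θ lam n) = 1 := by
    intro n
    rw [aCoef, map_mul, map_pow, map_inv₀, conj_omegaN, inv_inv, map_prod]
    have hpr : ∀ j ∈ Finset.range n,
        (starRingEnd ℂ) ((1 + lam⁻¹ * omegaN N ^ j / (Real.cos θ : ℂ)) /
          (1 + lam * (omegaN N)⁻¹ ^ j / (Real.cos θ : ℂ)))
        = (1 + lam * (omegaN N)⁻¹ ^ j / (Real.cos θ : ℂ)) /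
          (1 + lam⁻¹ * omegaN N ^ j / (Real.cos θ : ℂ)) := by
      intro j _
      rw [map_div₀, hconjfac, hconjfac']
    rw [Finset.prod_congr rfl hpr, mul_mul_mul_comm, ← Finset.prod_mul_distrib]
    have h1 : (omegaN N)⁻¹ ^ (n * (n - 1) / 2) * omegaN N ^ (n * (n - 1) / 2) = 1 := by
      rw [inv_pow, inv_mul_cancel₀ (pow_ne_zero _ (omegaN_ne_zero N))]
    have h2 : ∏ j ∈ Finset.range n,
        ((1 + lam⁻¹ * omegaN N ^ j / (Real.cos θ : ℂ)) /
          (1 + lam * (omegaN N)⁻¹ ^ j / (Real.cos θ : ℂ)) *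
        ((1 + lam * (omegaN N)⁻¹ ^ j / (Real.cos θ : ℂ)) /
          (1 + lam⁻¹ * omegaN N ^ j / (Real.cos θ : ℂ)))) = 1 := by
      refine Finset.prod_eq_one fun j _ => ?_
      rw [div_mul_div_comm, mul_comm, div_self (mul_ne_zero (hden j) (hnum j))]
    rw [h1, h2, one_mul]
  -- the summand simplifies
  have hsummand : ∀ n ∈ Finset.range N,
      aCoef N θ lam n * (starRingEnd ℂ) (bCoef N θ lam n)
        = (Real.tan θ : ℂ) * (1 + lam⁻¹ * omegaN N ^ n / (Real.cos θ : ℂ))⁻¹ := by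
    intro n _
    rw [bCoef, map_div₀, map_mul, Complex.conj_ofReal, hconjfac n]
    rw [div_eq_mul_inv, ← mul_assoc, ← mul_assoc, hconj_a n, one_mul]
  rw [Finset.sum_congr rfl hsummand, ← Finset.mul_sum]
  -- reparametrize with z
  set z : ℂ := -lam⁻¹ / (Real.cos θ : ℂ) with hzdef
  have hz_eq : ∀ n : ℕ, 1 + lam⁻¹ * omegaN N ^ n / (Real.cos θ : ℂ)
      = 1 - z * omegaN N ^ n := by
    intro n; rw [hzdef]; ring
  have hzn : ∀ n : ℕ, 1 - z * omegaN N ^ n ≠ 0 := fun n => (hz_eq n) ▸ hnum n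
  have hNC : (N : ℂ) ≠ 0 := Nat.cast_ne_zero.mpr (NeZero.ne N)
  have hlamN : lam ^ N = (-1 : ℂ) ^ k := by
    rw [hlam, ← Complex.exp_nat_mul,
      show (N : ℂ) * ((Real.pi : ℂ) * Complex.I * k / N) = (k : ℂ) * ((Real.pi : ℂ) * Complex.I) by
        field_simp,
      Complex.exp_nat_mul, Complex.exp_pi_mul_I]
  have hε : ((-1 : ℂ) ^ k) * ((-1 : ℂ) ^ k) = 1 := by
    rw [← pow_add, ← two_mul, pow_mul]; norm_num
  have hinv : ((-1 : ℂ) ^ k)⁻¹ = (-1 : ℂ) ^ k := inv_eq_of_mul_eq_one_right hε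
  have hzN : z ^ N = -((-1 : ℂ) ^ k) / (Real.cos θ : ℂ) ^ N := by
    rw [hzdef, div_pow, neg_pow, hN.neg_one_pow, inv_pow, hlamN, hinv]
    ring
  -- denominators nonzero
  have hcN0 : (0 : ℝ) < Real.cos θ ^ N := pow_pos hc0 N
  have hcN1 : Real.cos θ ^ N < 1 := pow_lt_one₀ hc0.le hc1 (NeZero.ne N)
  have hden1 : ((Real.cos θ : ℂ)) ^ N + (-1 : ℂ) ^ k ≠ 0 := by
    rcases Nat.even_or_odd k with hke | hko
    · rw [hke.neg_one_pow, show ((Real.cos θ : ℂ)) ^ N + 1 = ((Real.cos θ ^ N + 1 : ℝ) : ℂ) by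
        push_cast; ring]
      exact_mod_cast ne_of_gt (by linarith)
    · rw [hko.neg_one_pow, show ((Real.cos θ : ℂ)) ^ N + -1 = ((Real.cos θ ^ N - 1 : ℝ) : ℂ) by
        push_cast; ring]
      exact_mod_cast ne_of_lt (by linarith)
  have hcCN : ((Real.cos θ : ℝ) : ℂ) ^ N ≠ 0 := pow_ne_zero _ hcC
  have hzNne : 1 - z ^ N ≠ 0 := by
    rw [hzN]
    intro h
    apply hden1
    rw [sub_eq_zero, eq_div_iff hcCN] at h
    linear_combination h
  have hsum2 : ∑ n ∈ Finset.range N, (1 + lam⁻¹ * omegaN N ^ n / (Real.cos θ : ℂ))⁻¹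
      = (N : ℂ) / (1 - z ^ N) := by
    rw [Finset.sum_congr rfl fun n _ => congrArg Inv.inv (hz_eq n)]
    exact sum_inv_one_sub N z hzn hzNne
  rw [hsum2, hzN]
  have hden2 : 1 + (-1 : ℂ) ^ k * (Real.cos θ : ℂ) ^ N ≠ 0 := by
    intro h
    apply hden1
    linear_combination ((-1 : ℂ) ^ k) * h - ((Real.cos θ : ℂ) ^ N) * hε
  have hstep : (1 : ℂ) - -(-1 : ℂ) ^ k / (Real.cos θ : ℂ) ^ N
      = (((Real.cos θ : ℂ)) ^ N + (-1 : ℂ) ^ k) / (Real.cos θ : ℂ) ^ N := by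
    rw [eq_div_iff hcCN]
    rw [sub_mul, one_mul, neg_div, neg_mul, div_mul_cancel₀ _ hcCN]
    ring
  rw [hstep, div_div_eq_mul_div, mul_div_assoc', div_eq_div_iff hden1 hden2]
  linear_combination (-(Real.tan θ : ℂ) * (N : ℂ) * (Real.cos θ : ℂ) ^ N) * hε
end
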